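/- arXiv:1408.1178 — 5 statements merged into one kernel-verified Lean document; each statement's English description precedes it below -/
import Mathlib

section
/- Let n, n' ≥ 2, let z be a nonperiodic unit vector in V_{n,m} and y a nonperiodic unit vector in V_{n',l}. Then z * y is a nonperiodic unit vector in V_{nn',d}, where d is the least common multiple of m and l. -/
noncomputable section

/-- `Vnm n m` is the Hilbert space `ℓ²({1,…,n}^m)`, identified with `(ℂ^n)^{⊗m}`. -/
abbrev Vnm (n m : ℕ) : Type := EuclideanSpace ℂ (Fin m → Fin n)

/-- The tensor product `x ⊗ y`, via `(x ⊗ y)_{JK} = x_J y_K`. -/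
def tensV {n m l : ℕ} (x : Vnm n m) (y : Vnm n l) : Vnm n (m + l) :=
  WithLp.toLp 2 fun J => x (fun i => J (Fin.castAdd l i)) * y (fun i => J (Fin.natAdd m i))

/-- Re-indexing of a tensor along an equality of lengths. -/
def castV {n m m' : ℕ} (h : m = m') (z : Vnm n m) : Vnm n m' :=
  WithLp.toLp 2 fun J => z (fun i => J (Fin.cast h i))

/-- The tensor power `x^{⊗p}`. -/
def tpowV {n m : ℕ} (x : Vnm n m) (p : ℕ) : Vnm n (p * m) :=
  WithLp.toLp 2 fun J => ∏ i : Fin p, x (fun t => J ⟨(i : ℕ) * m + (t : ℕ), by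
    have h2 : (t : ℕ) < m := t.isLt
    have h1 : (i : ℕ) + 1 ≤ p := i.isLt
    have h3 : ((i : ℕ) + 1) * m = (i : ℕ) * m + m := by ring
    have h4 : ((i : ℕ) + 1) * m ≤ p * m := Nat.mul_le_mul_right m h1
    omega⟩)

/-- The coordinatewise complex conjugate. -/
def conjV {n m : ℕ} (z : Vnm n m) : Vnm n m := WithLp.toLp 2 fun J => starRingEnd ℂ (z J)

/-- A unit vector `z` is periodic if `z = x^{⊗p}` for some unit vector `x` and `p ≥ 2`;
it is nonperiodic if it is not periodic. -/
def PeriodicV {n m : ℕ} (z : Vnm n m) : Prop :=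
  ∃ (m' p : ℕ) (x : Vnm n m') (h : p * m' = m),
    ‖x‖ = 1 ∧ 2 ≤ p ∧ castV h (tpowV x p) = z

/-- The matricization of `z ∈ V_{n,b+a}` as an operator `V_{n,a} → V_{n,b}`,
`(T z) e_K = Σ_{|J|=b} z_{JK} e_J`. -/
def matT {n b a : ℕ} (z : Vnm n (b + a)) :
    EuclideanSpace ℂ (Fin a → Fin n) →L[ℂ] EuclideanSpace ℂ (Fin b → Fin n) :=
  LinearMap.toContinuousLinearMap
    (Matrix.toEuclideanLin
      (Matrix.of fun (J : Fin b → Fin n) (K : Fin a → Fin n) => z (Fin.append J K)))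

/-- The matricization `T_a(z) : V_{n,a} → V_{n,m-a}` of `z ∈ V_{n,m}`,
`T_a(z) e_K = Σ_{|J|=m−a} z_{JK} e_J`. -/
def Tmat {n m : ℕ} (a : ℕ) (h : a ≤ m) (z : Vnm n m) :
    EuclideanSpace ℂ (Fin a → Fin n) →L[ℂ] EuclideanSpace ℂ (Fin (m - a) → Fin n) :=
  matT (castV (by omega : m = (m - a) + a) z)

/-- `z` is indecomposable if it is not a tensor product of lower-degree tensors. -/
def IndecomposableV {n m : ℕ} (z : Vnm n m) : Prop :=
  1 ≤ m ∧ ¬ ∃ (a b : ℕ) (h : a + b = m) (x : Vnm n a) (y : Vnm n b),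
    1 ≤ a ∧ 1 ≤ b ∧ castV h (tensV x y) = z

/-- The iterated tensor product `x₁ ⊗ ⋯ ⊗ x_l` of homogeneous tensors of degrees `ms i`. -/
def bigTensV {n l : ℕ} (ms : Fin l → ℕ) (xs : ∀ i, Vnm n (ms i)) : Vnm n (∑ i, ms i) :=
  WithLp.toLp 2 fun J => ∏ i : Fin l, xs i (fun t => J ⟨(∑ j ∈ Finset.Iio i, ms j) + (t : ℕ), by
    have h1 : (∑ j ∈ Finset.Iio i, ms j) + ms i ≤ ∑ j, ms j := by
      calc (∑ j ∈ Finset.Iio i, ms j) + ms i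
          = ∑ j ∈ insert i (Finset.Iio i), ms j := by
            rw [Finset.sum_insert (by simp)]; ring
        _ ≤ ∑ j, ms j := Finset.sum_le_sum_of_subset (Finset.subset_univ _)
    have h2 : (t : ℕ) < ms i := t.isLt
    omega⟩)

/-- `z ⊠ y ∈ V_{nn',m}`: `(z ⊠ y)_L = z_J y_K` where `L = J ⊠ K` is given by the
pairing `l_t = n'·j_t + k_t` of `{0,…,n−1}×{0,…,n'−1}` with `{0,…,nn'−1}`. -/
def boxTensV {n n' m : ℕ} (z : Vnm n m) (y : Vnm n' m) : Vnm (n * n') m :=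
  WithLp.toLp 2 fun L =>
    z (fun t => ⟨(L t : ℕ) / n', by
        have h := (L t).isLt
        have hn' : 0 < n' := Nat.pos_of_ne_zero (by rintro rfl; simp at h)
        exact (Nat.div_lt_iff_lt_mul hn').mpr h⟩) *
    y (fun t => ⟨(L t : ℕ) % n', by
        have h := (L t).isLt
        have hn' : 0 < n' := Nat.pos_of_ne_zero (by rintro rfl; simp at h)
        exact Nat.mod_lt _ hn'⟩)

/-- `z * y := z^{⊗α} ⊠ y^{⊗β} ∈ V_{nn',d}` where `d = αm = βl` is the lcm of `m` and `l`. -/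
def starV {n n' m l : ℕ} (z : Vnm n m) (y : Vnm n' l) : Vnm (n * n') (Nat.lcm m l) :=
  boxTensV (castV (Nat.div_mul_cancel (Nat.dvd_lcm_left m l)) (tpowV z (Nat.lcm m l / m)))
    (castV (Nat.div_mul_cancel (Nat.dvd_lcm_right m l)) (tpowV y (Nat.lcm m l / l)))

/-- Conjugacy of homogeneous tensors: `z = y`, or `z = x₁ ⊗ x₂` and `y = x₂ ⊗ x₁`
for some unit vectors `x₁, x₂`. -/
def ConjVec {n m l : ℕ} (z : Vnm n m) (y : Vnm n l) : Prop :=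
  (∃ h : m = l, castV h z = y) ∨
    ∃ (a b : ℕ) (x₁ : Vnm n a) (x₂ : Vnm n b) (h₁ : a + b = m) (h₂ : b + a = l),
      ‖x₁‖ = 1 ∧ ‖x₂‖ = 1 ∧ castV h₁ (tensV x₁ x₂) = z ∧ castV h₂ (tensV x₂ x₁) = y

/-- A Cuntz family of order `n` on `H`: `Sᵢ* Sⱼ = δᵢⱼ 1` and `Σᵢ Sᵢ Sᵢ* = 1`. -/
def IsCuntzFamily {H : Type*} [NormedAddCommGroup H] [InnerProductSpace ℂ H]
    [CompleteSpace H] {n : ℕ} (S : Fin n → H →L[ℂ] H) : Prop :=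
  (∀ i j, (ContinuousLinearMap.adjoint (S i)).comp (S j) = if i = j then 1 else 0) ∧
    ∑ i, (S i).comp (ContinuousLinearMap.adjoint (S i)) = 1

/-- `S_J := S_{j₁} ∘ ⋯ ∘ S_{j_k}` for a word `J = (j₁,…,j_k)`, with `S_∅ = 1`. -/
def Sword {H : Type*} [NormedAddCommGroup H] [InnerProductSpace ℂ H]
    {ι : Type*} (S : ι → H →L[ℂ] H) : (k : ℕ) → (Fin k → ι) → (H →L[ℂ] H)
  | 0, _ => 1
  | (k + 1), J => (S (J 0)).comp (Sword S k (fun i => J i.succ))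

/-- `s(z) := Σ_{|J|=m} z_J S_J`. -/
def sop {H : Type*} [NormedAddCommGroup H] [InnerProductSpace ℂ H]
    {n m : ℕ} (S : Fin n → H →L[ℂ] H) (z : Vnm n m) : H →L[ℂ] H :=
  ∑ J : Fin m → Fin n, z J • Sword S m J


namespace SubCuntzAux

variable {A : Type*}

/-- `F` depends only on the first `d` coordinates. -/
def Dep (d : ℕ) (F : (ℕ → A) → ℂ) : Prop :=
  ∀ s t : ℕ → A, (∀ i < d, s i = t i) → F s = F t

/-- shift a sequence by `r`. -/
def sh (r : ℕ) (s : ℕ → A) : ℕ → A := fun i => s (i + r)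

/-- glue: first `r` coordinates from `a`, then `s`. -/
def gl (r : ℕ) (a s : ℕ → A) : ℕ → A := fun i => if i < r then a i else s (i - r)

lemma sh_sh (a b : ℕ) (s : ℕ → A) : sh a (sh b s) = sh (a + b) s := by
  funext i; simp [sh, Nat.add_assoc]

lemma sh_zero (s : ℕ → A) : sh 0 s = s := by funext i; simp [sh]

lemma sh_gl (r : ℕ) (a s : ℕ → A) : sh r (gl r a s) = s := by
  funext i; simp [sh, gl]

lemma gl_eq_self_lt {r : ℕ} {a s : ℕ → A} {i : ℕ} (h : i < r) : gl r a s i = a i := by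
  simp [gl, h]

/-- `sh r` after `gl d'` (with `r ≤ d'`) drops into a glue with shifted head. -/
lemma sh_gl_of_le {r d' : ℕ} (h : r ≤ d') (a s : ℕ → A) :
    sh r (gl d' a s) = gl (d' - r) (sh r a) s := by
  funext i; simp only [sh, gl]
  rcases lt_or_ge (i + r) d' with h1 | h1
  · rw [if_pos h1, if_pos (by omega)]
  · rw [if_neg (by omega), if_neg (by omega)]; congr 1; omega

/-- period structure: `F = C ⊗ X = X ⊗ C'` with the same middle `X`. -/
def PerS (d r : ℕ) (F : (ℕ → A) → ℂ) : Prop :=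
  ∃ C X C' : (ℕ → A) → ℂ, Dep r C ∧ Dep (d - r) X ∧ Dep r C' ∧
    (∀ s, F s = C s * X (sh r s)) ∧ (∀ s, F s = X s * C' (sh (d - r) s))

lemma Dep.congr {d : ℕ} {F : (ℕ → A) → ℂ} (hF : Dep d F) {s t : ℕ → A}
    (h : ∀ i < d, s i = t i) : F s = F t := hF s t h

lemma dep_gl {d r : ℕ} {F : (ℕ → A) → ℂ} (hF : Dep d F) (hr : d ≤ r) (a s : ℕ → A) :
    F (gl r a s) = F a := by
  apply hF; intro i hi; exact gl_eq_self_lt (lt_of_lt_of_le hi hr)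

lemma dep_sh {d r : ℕ} {F : (ℕ → A) → ℂ} (hF : Dep d F) :
    Dep (d + r) (fun s => F (sh r s)) := by
  intro s t h; apply hF; intro i hi; simp only [sh]; exact h _ (by omega)

/-- a product of `w`-factors at positions `i*g`, `i < k`. -/
def PW (k g : ℕ) (w : (ℕ → A) → ℂ) (s : ℕ → A) : ℂ :=
  ∏ i ∈ Finset.range k, w (sh (i * g) s)

lemma dep_PW {k g : ℕ} {w : (ℕ → A) → ℂ} (hw : Dep g w) : Dep (k * g) (PW k g w) := by
  intro s t h
  refine Finset.prod_congr rfl fun i hi => ?_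
  apply hw; intro j hj; simp only [sh]
  exact h _ (by simp at hi; nlinarith)

lemma PW_split (k₁ k₂ g : ℕ) (w : (ℕ → A) → ℂ) (s : ℕ → A) :
    PW (k₁ + k₂) g w s = PW k₁ g w s * PW k₂ g w (sh (k₁ * g) s) := by
  unfold PW
  rw [Finset.prod_range_add]
  congr 1
  refine Finset.prod_congr rfl fun i _ => ?_
  rw [sh_sh]; congr 2; ring


lemma sh_gl_of_ge {r q : ℕ} (h : r ≤ q) (a s : ℕ → A) :
    sh q (gl r a s) = sh (q - r) s := by
  funext i; simp only [sh, gl]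
  rw [if_neg (by omega)]; congr 1; omega

lemma dep_mono {d d' : ℕ} {F : (ℕ → A) → ℂ} (hF : Dep d F) (h : d ≤ d') : Dep d' F := by
  intro s t hst; exact hF s t fun i hi => hst i (by omega)

/-- uniqueness (up to scalar) of the head factor of a cut. -/
lemma cut_unique {r : ℕ} {Aa B X Y : (ℕ → A) → ℂ}
    (hAa : Dep r Aa) (hB : Dep r B)
    (heq : ∀ σ, Aa σ * X (sh r σ) = B σ * Y (sh r σ))
    {s₀ : ℕ → A} (hnz : Aa s₀ * X (sh r s₀) ≠ 0) :
    ∃ γ : ℂ, γ ≠ 0 ∧ ∀ t, Aa t = γ * B t := by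
  set τ := sh r s₀ with hτ
  have key : ∀ t, Aa t * X τ = B t * Y τ := by
    intro t
    have h := heq (gl r t τ)
    rw [sh_gl] at h
    rwa [hAa (gl r t τ) t fun i hi => gl_eq_self_lt hi,
      hB (gl r t τ) t fun i hi => gl_eq_self_lt hi] at h
  have hXτ : X τ ≠ 0 := fun h => hnz (by rw [h, mul_zero])
  have hAs₀ : Aa s₀ ≠ 0 := fun h => hnz (by rw [h, zero_mul])
  have hYτ : Y τ ≠ 0 := by
    intro h
    have hk := key s₀
    rw [h, mul_zero] at hk
    exact mul_ne_zero hAs₀ hXτ hk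
  refine ⟨Y τ / X τ, div_ne_zero hYτ hXτ, fun t => ?_⟩
  have h := key t
  field_simp
  linear_combination h

lemma prefix_period {d r : ℕ} {F C X C' : (ℕ → A) → ℂ} (h2r : 2*r ≤ d)
    (hC : Dep r C) (hX : Dep (d - r) X) (hC' : Dep r C')
    (e1 : ∀ σ, F σ = C σ * X (sh r σ)) (e2 : ∀ σ, F σ = X σ * C' (sh (d - r) σ))
    (hnz : ∃ σ, F σ ≠ 0) :
    ∃ X', Dep (d - 2*r) X' ∧ (∀ σ, X σ = C σ * X' (sh r σ)) ∧
      (∀ σ, X σ = X' σ * C' (sh (d - 2*r) σ)) := by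
  obtain ⟨sF, hsF⟩ := hnz
  have star : ∀ σ, C σ * X (sh r σ) = X σ * C' (sh (d - r) σ) := by
    intro σ; rw [← e1, ← e2]
  have hCsF : C sF ≠ 0 := fun h => hsF (by rw [e1, h, zero_mul])
  set s₀ := sh (d - r) sF with hs₀
  have hC's₀ : C' s₀ ≠ 0 := fun h => hsF (by rw [e2, ← hs₀, h, mul_zero])
  have harith : d - r - r = d - 2*r := by omega
  -- identity (I)
  have I : ∀ u, C sF * X u = X (gl r sF u) * C' (sh (d - 2*r) u) := by
    intro u
    have h := star (gl r sF u)
    rw [sh_gl, dep_gl hC (le_refl _), sh_gl_of_ge (by omega : r ≤ d - r), harith] at h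
    exact h
  refine ⟨fun t => X (gl (d - 2*r) t s₀) / C' s₀, ?_, ?_, ?_⟩
  · intro t t' h
    have hgl : gl (d - 2*r) t s₀ = gl (d - 2*r) t' s₀ := by
      funext i; simp only [gl]
      by_cases hi : i < d - 2*r
      · rw [if_pos hi, if_pos hi]; exact h i hi
      · rw [if_neg hi, if_neg hi]
    simp only [hgl]
  · -- X σ = C σ * X' (sh r σ)
    intro σ
    have h := star (gl (d - r) σ s₀)
    rw [dep_gl hC (by omega), dep_gl hX (le_refl _), sh_gl,
      sh_gl_of_le (by omega : r ≤ d - r), harith] at h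
    field_simp
    linear_combination -h
  · -- X σ = X' σ * C' (sh (d - 2r) σ)
    intro σ
    have I1 := I (gl (d - 2*r) σ s₀)
    rw [sh_gl] at I1
    have hXX : X (gl r sF (gl (d - 2*r) σ s₀)) = X (gl r sF σ) := by
      apply hX
      intro i hi
      simp only [gl]
      by_cases h1 : i < r
      · rw [if_pos h1, if_pos h1]
      · rw [if_neg h1, if_neg h1, if_pos (by omega)]
    rw [hXX] at I1
    have I2 := I σ
    have key : C sF * (X σ * C' s₀) =
        C sF * ((X (gl (d - 2*r) σ s₀)) * C' (sh (d - 2*r) σ)) := by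
      linear_combination C' s₀ * I2 - C' (sh (d - 2*r) σ) * I1
    have h3 := mul_left_cancel₀ hCsF key
    field_simp
    linear_combination h3


lemma prefix_period2 {d r s : ℕ} {F Aa X A' B Y B' : (ℕ → A) → ℂ}
    (hrs : r < s) (hsd : r + s ≤ d)
    (hAa : Dep r Aa) (hX : Dep (d - r) X) (hA' : Dep r A')
    (hB : Dep s B) (hY : Dep (d - s) Y) (hB' : Dep s B')
    (ea1 : ∀ σ, F σ = Aa σ * X (sh r σ)) (ea2 : ∀ σ, F σ = X σ * A' (sh (d - r) σ))
    (eb1 : ∀ σ, F σ = B σ * Y (sh s σ)) (eb2 : ∀ σ, F σ = Y σ * B' (sh (d - s) σ))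
    (hnz : ∃ σ, F σ ≠ 0) :
    ∃ D D', Dep (s - r) D ∧ Dep (s - r) D' ∧
      (∀ t, X t = D t * Y (sh (s - r) t)) ∧ (∀ t, X t = Y t * D' (sh (d - s) t)) := by
  obtain ⟨sF, hsF⟩ := hnz
  have hAasF : Aa sF ≠ 0 := fun h => hsF (by rw [ea1, h, zero_mul])
  set s₁ := sh (d - r) sF with hs₁
  have hA's₁ : A' s₁ ≠ 0 := fun h => hsF (by rw [ea2, h, mul_zero])
  refine ⟨fun t => B (gl r sF t) / Aa sF, fun t => B' (gl (s - r) t s₁) / A' s₁,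
    ?_, ?_, ?_, ?_⟩
  · intro t t' h
    have hgl : ∀ i < s, gl r sF t i = gl r sF t' i := by
      intro i hi
      simp only [gl]
      by_cases h1 : i < r
      · rw [if_pos h1, if_pos h1]
      · rw [if_neg h1, if_neg h1]; exact h _ (by omega)
    simp only [hB _ _ hgl]
  · intro t t' h
    have hgl : ∀ i < s, gl (s - r) t s₁ i = gl (s - r) t' s₁ i := by
      intro i hi
      simp only [gl]
      by_cases h1 : i < s - r
      · rw [if_pos h1, if_pos h1]; exact h _ h1
      · rw [if_neg h1, if_neg h1]
    simp only [hB' _ _ hgl]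
  · intro t
    have h : Aa (gl r sF t) * X (sh r (gl r sF t)) =
        B (gl r sF t) * Y (sh s (gl r sF t)) := by rw [← ea1, ← eb1]
    rw [sh_gl, dep_gl hAa (le_refl _), sh_gl_of_ge (le_of_lt hrs)] at h
    field_simp
    linear_combination h
  · intro t
    have h : X (gl (d - r) t s₁) * A' (sh (d - r) (gl (d - r) t s₁)) =
        Y (gl (d - r) t s₁) * B' (sh (d - s) (gl (d - r) t s₁)) := by
      rw [← ea2, ← eb2]
    rw [sh_gl, dep_gl hX (le_refl _), dep_gl hY (by omega),
      sh_gl_of_le (by omega : d - s ≤ d - r)] at h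
    have harith : d - r - (d - s) = s - r := by omega
    rw [harith] at h
    field_simp
    linear_combination h

/-- a scalar-free power structure gives a period structure. -/
lemma pow_perS {d p r : ℕ} {u F : (ℕ → A) → ℂ} (hd : p * r = d) (hp : 1 ≤ p)
    (hu : Dep r u) (hF : ∀ σ, F σ = PW p r u σ) : PerS d r F := by
  refine ⟨u, PW (p - 1) r u, u, hu, ?_, hu, ?_, ?_⟩
  · obtain ⟨q, rfl⟩ : ∃ q, p = q + 1 := ⟨p - 1, by omega⟩
    have h2 : (q + 1) * r = q * r + r := by ring
    rw [h2] at hd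
    have h3 : (q + 1 - 1) * r = d - r := by simp; omega
    rw [← h3]
    exact dep_PW hu
  · intro σ
    rw [hF]
    unfold PW
    obtain ⟨q, rfl⟩ : ∃ q, p = q + 1 := ⟨p - 1, by omega⟩
    rw [Finset.prod_range_succ']
    simp only [Nat.add_sub_cancel, zero_mul, sh_zero]
    rw [mul_comm]
    congr 1
    refine Finset.prod_congr rfl fun i _ => ?_
    rw [sh_sh]
    congr 2
    ring
  · intro σ
    rw [hF]
    unfold PW
    obtain ⟨q, rfl⟩ : ∃ q, p = q + 1 := ⟨p - 1, by omega⟩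
    rw [Finset.prod_range_succ]
    simp only [Nat.add_sub_cancel]
    have h2 : (q + 1) * r = q * r + r := by ring
    rw [h2] at hd
    have h3 : q * r = d - r := by omega
    rw [h3]


/-- Fine–Wilf for tensors: if `F` has period structures `r` and `s` with `r + s ≤ d`,
then the head factors of both cuts can be chosen to be `gcd r s`-power-like,
with a common base `w`. -/
theorem FW (Nb : ℕ) : ∀ (r s d : ℕ) (F : (ℕ → A) → ℂ), r + s ≤ Nb → 1 ≤ r → r ≤ s →
    r + s ≤ d → (∃ σ, F σ ≠ 0) → PerS d r F → PerS d s F →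
    ∃ w X Y, Dep (Nat.gcd r s) w ∧ Dep (d - r) X ∧ Dep (d - s) Y ∧
      (∀ t, F t = PW (r / Nat.gcd r s) (Nat.gcd r s) w t * X (sh r t)) ∧
      (∀ t, F t = PW (s / Nat.gcd r s) (Nat.gcd r s) w t * Y (sh s t)) := by
  induction Nb using Nat.strong_induction_on with
  | _ Nb IH =>
  intro r s d F hN hr hrs hd hnz hPr hPs
  rcases eq_or_lt_of_le hrs with heq | hlt
  · -- r = s
    subst heq
    obtain ⟨C, X, C', hC, hX, hC', e1, e2⟩ := hPr
    refine ⟨C, X, X, by rwa [Nat.gcd_self], hX, hX, ?_, ?_⟩ <;>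
    · intro t
      rw [Nat.gcd_self, Nat.div_self (by omega : 0 < r)]
      unfold PW
      rw [Finset.prod_range_one, zero_mul, sh_zero]
      exact e1 t
  · -- r < s
    obtain ⟨sF, hsF⟩ := hnz
    obtain ⟨Aa, X, A', hAa, hX, hA', ea1, ea2⟩ := hPr
    obtain ⟨B, Y, B', hB, hY, hB', eb1, eb2⟩ := hPs
    have h2r : 2*r ≤ d := by omega
    obtain ⟨X', hX', x1, x2⟩ := prefix_period h2r hAa hX hA' ea1 ea2 ⟨sF, hsF⟩
    obtain ⟨D, D', hD, hD', y1, y2⟩ :=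
      prefix_period2 hlt hd hAa hX hA' hB hY hB' ea1 ea2 eb1 eb2 ⟨sF, hsF⟩
    have hnzX : X (sh r sF) ≠ 0 := fun h => hsF (by rw [ea1, h, mul_zero])
    set d₁ := d - r with hd₁
    have hPr' : PerS d₁ r X := by
      refine ⟨Aa, X', A', hAa, ?_, hA', x1, ?_⟩
      · have : d₁ - r = d - 2*r := by omega
        rwa [this]
      · have : d₁ - r = d - 2*r := by omega
        rw [this]; exact x2
    have hPs' : PerS d₁ (s - r) X := by
      refine ⟨D, Y, D', hD, ?_, hD', y1, ?_⟩
      · have : d₁ - (s - r) = d - s := by omega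
        rwa [this]
      · have : d₁ - (s - r) = d - s := by omega
        rw [this]; exact y2
    have hgcd : Nat.gcd r (s - r) = Nat.gcd r s := Nat.gcd_sub_self_right (le_of_lt hlt)
    set g := Nat.gcd r s with hg
    have hgr : g ∣ r := Nat.gcd_dvd_left r s
    have hgs : g ∣ s := Nat.gcd_dvd_right r s
    have hg0 : 0 < g := Nat.gcd_pos_of_pos_left _ (by omega)
    -- recursive call, sorted
    have main : ∃ w X₁ Y₁, Dep g w ∧ Dep (d₁ - r) X₁ ∧ Dep (d₁ - (s - r)) Y₁ ∧
        (∀ t, X t = PW (r / g) g w t * X₁ (sh r t)) ∧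
        (∀ t, X t = PW ((s - r) / g) g w t * Y₁ (sh (s - r) t)) := by
      rcases le_or_gt r (s - r) with hc | hc
      · obtain ⟨w, X₁, Y₁, hw, hX₁, hY₁, i1, i2⟩ :=
          IH s (by omega) r (s - r) d₁ X (by omega) hr hc (by omega)
            ⟨sh r sF, hnzX⟩ hPr' hPs'
        rw [hgcd] at hw i1 i2
        exact ⟨w, X₁, Y₁, hw, hX₁, hY₁, i1, i2⟩
      · obtain ⟨w, Y₁, X₁, hw, hY₁, hX₁, i2, i1⟩ :=
          IH s (by omega) (s - r) r d₁ X (by omega) (by omega) (le_of_lt hc) (by omega)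
            ⟨sh r sF, hnzX⟩ hPs' hPr'
        rw [Nat.gcd_comm (s - r) r] at hw i1 i2
        rw [hgcd] at hw i1 i2
        exact ⟨w, X₁, Y₁, hw, hX₁, hY₁, i1, i2⟩
    obtain ⟨w, X₁, Y₁, hw, hX₁, hY₁, i1, i2⟩ := main
    have hrg : r / g * g = r := Nat.div_mul_cancel hgr
    have hPWdep : Dep r (PW (r / g) g w) := by
      have := dep_PW (k := r / g) hw
      rwa [hrg] at this
    -- step (a): Aa is proportional to the PW power
    set τ := sh r sF with hτ
    have star : ∀ σ, Aa σ * X (sh r σ) = X σ * A' (sh (d - r) σ) := by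
      intro σ; rw [← ea1, ← ea2]
    have key : ∀ t, Aa t * X τ = PW (r / g) g w t * (X₁ τ * A' (sh (d - 2*r) τ)) := by
      intro t
      have h := star (gl r t τ)
      rw [sh_gl, dep_gl hAa (le_refl _), sh_gl_of_ge (by omega : r ≤ d - r)] at h
      have harith : d - r - r = d - 2*r := by omega
      rw [harith] at h
      rw [i1 (gl r t τ), sh_gl, dep_gl hPWdep (le_refl _)] at h
      rw [h]; ring
    set γ := (X₁ τ * A' (sh (d - 2*r) τ)) / X τ with hγ
    have hAaPW : ∀ t, Aa t = γ * PW (r / g) g w t := by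
      intro t
      have h := key t
      rw [hγ]
      field_simp
      linear_combination h
    refine ⟨w, fun u => γ * X u, fun u => γ * Y₁ u, hw, ?_, ?_, ?_, ?_⟩
    · intro u v huv; simp only []; rw [hX u v huv]
    · intro u v huv
      simp only []
      congr 1
      apply hY₁
      intro i hi
      exact huv i (by omega)
    · intro t
      rw [ea1 t, hAaPW t]
      ring
    · intro t
      rw [ea1 t, hAaPW t, i2 (sh r t), sh_sh]
      have harith : s - r + r = s := by omega
      rw [harith]
      obtain ⟨a, ha⟩ := hgr
      obtain ⟨b, hb⟩ := hgs
      have hab : a ≤ b := Nat.le_of_mul_le_mul_left (by omega) hg0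
      have h1 : r / g = a := by rw [ha, Nat.mul_div_cancel_left _ hg0]
      have h2 : s / g = b := by rw [hb, Nat.mul_div_cancel_left _ hg0]
      have h3 : (s - r) / g = b - a := by
        rw [ha, hb, ← Nat.mul_sub, Nat.mul_div_cancel_left _ hg0]
      rw [h1, h2, h3]
      have h6 : PW b g w t = PW (a + (b - a)) g w t := by
        congr 1
        omega
      rw [h6, PW_split]
      have h5 : a * g = r := by rw [← h1, hrg]
      rw [h5]
      ring

/-! ### Translation between finite tensors and sequence functions -/

variable {n : ℕ}

/-- restriction of a sequence to its first `d` coordinates. -/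
def res (d : ℕ) (s : ℕ → Fin n) : Fin d → Fin n := fun i => s i

/-- extension of a finite word to a sequence. -/
def seqOf (hn : 0 < n) {d : ℕ} (J : Fin d → Fin n) : ℕ → Fin n :=
  fun i => if h : i < d then J ⟨i, h⟩ else ⟨0, hn⟩

lemma res_seqOf (hn : 0 < n) {d : ℕ} (J : Fin d → Fin n) : res d (seqOf hn J) = J := by
  funext i; simp [res, seqOf, i.isLt]

/-- a tensor as a function of sequences. -/
def zSeq {m : ℕ} (z : Vnm n m) : (ℕ → Fin n) → ℂ := fun s => z (res m s)

lemma dep_zSeq {m : ℕ} (z : Vnm n m) : Dep m (zSeq z) := by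
  intro s t h
  unfold zSeq
  rw [show res m s = res m t from funext fun i => h i i.isLt]

lemma gl_congr {r : ℕ} {a a' : ℕ → Fin n} (s : ℕ → Fin n)
    (h : ∀ i < r, a i = a' i) : gl r a s = gl r a' s := by
  funext i; simp only [gl]
  by_cases hi : i < r
  · rw [if_pos hi, if_pos hi]; exact h i hi
  · rw [if_neg hi, if_neg hi]

/-- the power `castV h (tpowV x p)` in sequence language is a `PW`. -/
lemma zSeq_cast_tpow {m' p D : ℕ} (h : p * m' = D) (x : Vnm n m') (s : ℕ → Fin n) :
    zSeq (castV h (tpowV x p)) s = PW p m' (zSeq x) s := by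
  calc zSeq (castV h (tpowV x p)) s
      = ∏ i : Fin p, (fun i : ℕ => x (fun t : Fin m' => s (i * m' + t))) (i : ℕ) := rfl
    _ = ∏ i ∈ Finset.range p, (fun i : ℕ => x (fun t : Fin m' => s (i * m' + t))) i :=
        Fin.prod_univ_eq_prod_range (fun i : ℕ => x (fun t : Fin m' => s (i * m' + t))) p
    _ = PW p m' (zSeq x) s := by
        refine Finset.prod_congr rfl fun i _ => ?_
        simp only []
        unfold zSeq res sh
        refine congrArg (WithLp.ofLp x) ?_
        funext t
        congr 1
        omega

lemma PW_smul {k g : ℕ} (c : ℂ) (w : (ℕ → Fin n) → ℂ) (s : ℕ → Fin n) :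
    PW k g (fun t => c * w t) s = c ^ k * PW k g w s := by
  unfold PW
  rw [Finset.prod_mul_distrib, Finset.prod_const, Finset.card_range]

/-- chunking equivalence. -/
def chunkE (k g : ℕ) (hg : 0 < g) (X : Type*) : (Fin (k*g) → X) ≃ (Fin k → Fin g → X) where
  toFun J i t := J ⟨(i : ℕ) * g + t, by
    have h1 := i.isLt; have h2 := t.isLt; nlinarith⟩
  invFun f j := f ⟨(j : ℕ) / g, by
    apply Nat.div_lt_of_lt_mul; rw [mul_comm g k]; exact j.isLt⟩
    ⟨(j : ℕ) % g, Nat.mod_lt _ hg⟩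
  left_inv J := by
    funext j
    simp only []
    congr 1
    apply Fin.ext
    simp only []
    have h1 := Nat.div_add_mod (j : ℕ) g
    have h2 : g * ((j : ℕ) / g) = ((j : ℕ) / g) * g := mul_comm _ _
    omega
  right_inv f := by
    funext i t
    have h1 : ((i : ℕ) * g + t) / g = (i : ℕ) := by
      rw [show (i : ℕ) * g + (t : ℕ) = g * i + t from by ring,
        Nat.mul_add_div hg, Nat.div_eq_of_lt t.isLt, add_zero]
    have h2 : ((i : ℕ) * g + t) % g = (t : ℕ) := by
      rw [show (i : ℕ) * g + (t : ℕ) = g * i + t from by ring,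
        Nat.mul_add_mod, Nat.mod_eq_of_lt t.isLt]
    simp only []
    congr 1 <;> [exact Fin.ext h1; exact Fin.ext h2]
  
set_option maxHeartbeats 1000000 in
/-- sums of chunk-products. -/
lemma sum_prod_chunk {k g : ℕ} (hg : 0 < g) (f : (Fin g → Fin n) → ℝ) :
    ∑ J : Fin (k*g) → Fin n, ∏ i : Fin k,
      f (fun t => J ⟨(i : ℕ) * g + t, by have h1 := i.isLt; have h2 := t.isLt; nlinarith⟩)
      = (∑ K : Fin g → Fin n, f K) ^ k := by
  calc (∑ J : Fin (k*g) → Fin n, ∏ i : Fin k,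
      f (fun t => J ⟨(i : ℕ) * g + t, by have h1 := i.isLt; have h2 := t.isLt; nlinarith⟩))
      = ∑ J : Fin (k*g) → Fin n, ∏ i : Fin k, f ((chunkE k g hg (Fin n)) J i) := rfl
    _ = ∑ h : Fin k → Fin g → Fin n, ∏ i : Fin k, f (h i) := Equiv.sum_comp (chunkE k g hg (Fin n)) (fun h : Fin k → Fin g → Fin n => ∏ i : Fin k, f (h i))
    _ = ∑ h ∈ Fintype.piFinset (fun _ : Fin k => Finset.univ), ∏ i : Fin k, f (h i) := by
        rw [Fintype.piFinset_univ]
    _ = ∏ _i : Fin k, ∑ K : Fin g → Fin n, f K :=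
        (Finset.prod_univ_sum (fun _ => Finset.univ) (fun _ K => f K)).symm
    _ = (∑ K : Fin g → Fin n, f K) ^ k := by
        rw [Finset.prod_const, Finset.card_univ, Fintype.card_fin]


/-- pairing equivalence for the box product. -/
def pairE (m n n' : ℕ) (hn' : 0 < n') :
    (Fin m → Fin (n * n')) ≃ ((Fin m → Fin n) × (Fin m → Fin n')) where
  toFun L := (fun t => ⟨(L t : ℕ) / n', by
      apply Nat.div_lt_of_lt_mul; rw [mul_comm n' n]; exact (L t).isLt⟩,
    fun t => ⟨(L t : ℕ) % n', Nat.mod_lt _ hn'⟩)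
  invFun P t := ⟨(P.1 t : ℕ) * n' + P.2 t, by
    have h1 := (P.1 t).isLt; have h2 := (P.2 t).isLt; nlinarith⟩
  left_inv L := by
    funext t
    simp only []
    apply Fin.ext
    simp only []
    have h1 := Nat.div_add_mod ((L t) : ℕ) n'
    have h2 : n' * ((L t : ℕ) / n') = ((L t : ℕ) / n') * n' := mul_comm _ _
    omega
  right_inv P := by
    apply Prod.ext <;> funext t <;> simp only [] <;> apply Fin.ext <;> simp only []
    · rw [show ((P.1 t) : ℕ) * n' + ((P.2 t) : ℕ) = n' * (P.1 t) + P.2 t from by ring,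
        Nat.mul_add_div hn', Nat.div_eq_of_lt (P.2 t).isLt, add_zero]
    · rw [show ((P.1 t) : ℕ) * n' + ((P.2 t) : ℕ) = n' * (P.1 t) + P.2 t from by ring,
        Nat.mul_add_mod, Nat.mod_eq_of_lt (P.2 t).isLt]

lemma sum_sq_cast {m D : ℕ} (h : m = D) (z : Vnm n m) :
    ∑ J : Fin D → Fin n, ‖castV h z J‖^2 = ∑ J : Fin m → Fin n, ‖z J‖^2 := by
  subst h
  refine Finset.sum_congr rfl fun J _ => ?_
  congr 1

lemma sum_sq_tpow {m p : ℕ} (hm : 0 < m) (x : Vnm n m) :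
    ∑ J : Fin (p * m) → Fin n, ‖tpowV x p J‖^2
      = (∑ K : Fin m → Fin n, ‖x K‖^2) ^ p := by
  rw [← sum_prod_chunk (k := p) hm (fun K => ‖x K‖^2)]
  refine Finset.sum_congr rfl fun J _ => ?_
  unfold tpowV
  rw [norm_prod, Finset.prod_pow]


lemma sum_sq_box {n' m : ℕ} (hn' : 0 < n') (Z : Vnm n m) (Y : Vnm n' m) :
    ∑ L : Fin m → Fin (n * n'), ‖boxTensV Z Y L‖^2
      = (∑ J : Fin m → Fin n, ‖Z J‖^2) * (∑ K : Fin m → Fin n', ‖Y K‖^2) := by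
  have key : ∀ L : Fin m → Fin (n * n'), ‖boxTensV Z Y L‖^2
      = ‖Z ((pairE m n n' hn' L).1)‖^2 * ‖Y ((pairE m n n' hn' L).2)‖^2 := by
    intro L
    unfold boxTensV
    simp only [PiLp.toLp_apply]
    rw [norm_mul, mul_pow]
    rfl
  rw [Finset.sum_congr rfl fun L _ => key L]
  rw [Equiv.sum_comp (pairE m n n' hn')
    (fun P : (Fin m → Fin n) × (Fin m → Fin n') => ‖Z P.1‖^2 * ‖Y P.2‖^2)]
  rw [Fintype.sum_prod_type]
  simp only []
  rw [Finset.sum_mul_sum]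

/-- sum of squares of a unit vector is 1. -/
lemma sum_sq_one {m : ℕ} {z : Vnm n m} (hz : ‖z‖ = 1) :
    ∑ J : Fin m → Fin n, ‖z J‖^2 = 1 := by
  have h := EuclideanSpace.norm_eq z
  rw [hz] at h
  exact Real.sqrt_eq_one.mp h.symm

/-- norm of `starV` of unit vectors. -/
lemma norm_starV {n' m l : ℕ} (hm : 0 < m) (hl : 0 < l) (hn' : 0 < n')
    (z : Vnm n m) (y : Vnm n' l) (hz : ‖z‖ = 1) (hy : ‖y‖ = 1) :
    ‖starV z y‖ = 1 := by
  rw [EuclideanSpace.norm_eq]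
  unfold starV
  rw [sum_sq_box hn', sum_sq_cast, sum_sq_cast, sum_sq_tpow hm, sum_sq_tpow hl,
    sum_sq_one hz, sum_sq_one hy, one_pow, one_pow, mul_one, Real.sqrt_one]


lemma PW_one {g : ℕ} (w : (ℕ → Fin n) → ℂ) (s : ℕ → Fin n) : PW 1 g w s = w s := by
  unfold PW
  rw [Finset.prod_range_one, zero_mul, sh_zero]

lemma exists_coord_ne_zero {m : ℕ} {z : Vnm n m} (hz : ‖z‖ = 1) : ∃ J, z J ≠ 0 := by
  by_contra h
  push_neg at h
  have hz0 : z = 0 := by ext J; exact h J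
  rw [hz0] at hz
  simp at hz

lemma PW_zSeq_ne_zero {m k : ℕ} (hm : 0 < m) {z : Vnm n m} {J : Fin m → Fin n}
    (hJ : z J ≠ 0) :
    PW k m (zSeq z) (fun i => J ⟨i % m, Nat.mod_lt _ hm⟩) ≠ 0 := by
  rw [PW]
  rw [Finset.prod_ne_zero_iff]
  intro i _
  have : res m (sh (i * m) (fun i => J ⟨i % m, Nat.mod_lt _ hm⟩)) = J := by
    funext t
    unfold res sh
    simp only []
    congr 1
    apply Fin.ext
    simp only []
    rw [Nat.add_mul_mod_self_right, Nat.mod_eq_of_lt t.isLt]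
  unfold zSeq
  rw [this]
  exact hJ

/-- If `z` (as a sequence function) is a scalar times a `k`-fold power with `k ≥ 2`,
then `z` is periodic. -/
lemma periodic_of_seq_pow {m g k : ℕ} (hn : 0 < n) (hg : 1 ≤ g) (hk : 2 ≤ k)
    (hkg : k * g = m) {z : Vnm n m} (hz : ‖z‖ = 1) {w : (ℕ → Fin n) → ℂ}
    (hw : Dep g w) {γ : ℂ} (heq : ∀ t, zSeq z t = γ * PW k g w t) : PeriodicV z := by
  subst hkg
  have hm : 0 < k * g := by positivity
  obtain ⟨δ, hδ⟩ := IsAlgClosed.exists_pow_nat_eq γ (n := k) (by omega)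
  set x' : Vnm n g := WithLp.toLp 2 (fun K => δ * w (seqOf hn K)) with hx'
  have hbound : ∀ (i : Fin k) (t : Fin g), (i : ℕ) * g + t < k * g := by
    intro i t
    have h1 := i.isLt; have h2 := t.isLt
    nlinarith
  have hbound' : ∀ (i t : ℕ), t < g → (i % k) * g + t < k * g := by
    intro i t ht
    have h3 := Nat.mod_lt i (show 0 < k by omega)
    nlinarith
  have key : ∀ J : Fin (k * g) → Fin n,
      z J = ∏ i : Fin k, x' (fun t => J ⟨(i : ℕ) * g + t, hbound i t⟩) := by
    intro J
    have h1 : z J = zSeq z (seqOf hn J) := by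
      unfold zSeq
      rw [res_seqOf]
    have e1 : (∏ i : Fin k, x' fun t => J ⟨(i : ℕ) * g + t, hbound i t⟩)
        = ∏ i : Fin k, (fun i : ℕ =>
            x' (fun t : Fin g => J ⟨(i % k) * g + t, hbound' i t t.isLt⟩)) (i : ℕ) := by
      refine Finset.prod_congr rfl fun i _ => ?_
      simp only []
      refine congrArg (WithLp.ofLp x') ?_
      funext t
      congr 1
      apply Fin.ext
      simp only []
      rw [Nat.mod_eq_of_lt i.isLt]
    rw [h1, heq, ← hδ, e1, Fin.prod_univ_eq_prod_range
      (fun i : ℕ => x' (fun t : Fin g => J ⟨(i % k) * g + t, hbound' i t t.isLt⟩)) k]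
    simp only []
    rw [hx']
    rw [Finset.prod_mul_distrib, Finset.prod_const, Finset.card_range]
    congr 1
    unfold PW
    refine Finset.prod_congr rfl fun i hi => ?_
    rw [Finset.mem_range] at hi
    apply hw
    intro t ht
    unfold seqOf sh
    simp only []
    rw [dif_pos (by nlinarith : t + i * g < k * g), dif_pos ht]
    congr 1
    apply Fin.ext
    simp only []
    rw [Nat.mod_eq_of_lt hi]
    omega
  -- norm of x'
  have hsum1 : (∑ K : Fin g → Fin n, ‖x' K‖^2) ^ k = 1 := by
    rw [← sum_prod_chunk (k := k) hg (fun K => ‖x' K‖^2)]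
    rw [← sum_sq_one hz]
    refine Finset.sum_congr rfl fun J _ => ?_
    rw [key J, norm_prod, Finset.prod_pow]
  have hS0 : (0:ℝ) ≤ ∑ K : Fin g → Fin n, ‖x' K‖^2 :=
    Finset.sum_nonneg fun K _ => by positivity
  have hS1 : ∑ K : Fin g → Fin n, ‖x' K‖^2 = 1 := by
    set S := ∑ K : Fin g → Fin n, ‖x' K‖^2 with hS
    rcases lt_trichotomy S 1 with h | h | h
    · exfalso
      have : S ^ k < 1 := pow_lt_one₀ hS0 h (by omega)
      rw [hsum1] at this
      exact lt_irrefl _ this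
    · exact h
    · exfalso
      have : 1 < S ^ k := one_lt_pow₀ h (by omega)
      rw [hsum1] at this
      exact lt_irrefl _ this
  have hnx' : ‖x'‖ = 1 := by
    rw [EuclideanSpace.norm_eq, hS1, Real.sqrt_one]
  exact ⟨g, k, x', rfl, hnx', hk, by ext J; exact (key J).symm⟩


/-- If `z^{⊗α} = u^{⊗p}` in sequence form, `z` nonperiodic, `p ≥ 2`, then `m ∣ m'`. -/
lemma dvd_of_two_powers {m d : ℕ} (hn : 0 < n) (hm : 1 ≤ m) (hd1 : 1 ≤ d)
    {α : ℕ} (hα : α * m = d) {m' p : ℕ} (hp : 2 ≤ p) (hpm : p * m' = d)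
    {z : Vnm n m} (hz : ‖z‖ = 1) (hznp : ¬ PeriodicV z)
    {u : (ℕ → Fin n) → ℂ} (hu : Dep m' u)
    (heq : ∀ t, PW α m (zSeq z) t = PW p m' u t) : m ∣ m' := by
  have hm' : 1 ≤ m' := by
    rcases Nat.eq_zero_or_pos m' with h | h
    · rw [h, mul_zero] at hpm; omega
    · exact h
  have hα1 : 1 ≤ α := by
    rcases Nat.eq_zero_or_pos α with h | h
    · rw [h, zero_mul] at hα; omega
    · exact h
  obtain ⟨J, hJ⟩ := exists_coord_ne_zero hz
  set a₀ : ℕ → Fin n := fun i => J ⟨i % m, Nat.mod_lt _ (by omega)⟩ with ha₀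
  have hFz : PW α m (zSeq z) a₀ ≠ 0 := PW_zSeq_ne_zero (by omega) hJ
  rcases eq_or_lt_of_le hα1 with hα2 | hα2
  · -- α = 1 : z itself is a p-th power, contradiction
    exfalso
    apply hznp
    have hmd : m = d := by rw [← hα2, one_mul] at hα; exact hα
    refine periodic_of_seq_pow hn hm' hp (by omega) hz hu (γ := 1) fun t => ?_
    rw [one_mul, ← heq t, ← hα2, PW_one]
  · -- α ≥ 2
    by_contra hnd
    set g := Nat.gcd m m' with hg
    have hgm : g ∣ m := Nat.gcd_dvd_left _ _
    have hgm' : g ∣ m' := Nat.gcd_dvd_right _ _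
    have hg1 : 1 ≤ g := Nat.gcd_pos_of_pos_left _ (by omega)
    have hgne : g ≠ m := fun h => hnd (h ▸ hgm')
    have hglt : g < m := lt_of_le_of_ne (Nat.le_of_dvd (by omega) hgm) hgne
    have hmg2 : 2 ≤ m / g := by
      obtain ⟨c, hc⟩ := hgm
      rcases c with _ | _ | c
      · omega
      · omega
      · rw [hc, Nat.mul_div_cancel_left _ (by omega : 0 < g)]; omega
    have hsum : m + m' ≤ d := by
      have h1 : 2 * m ≤ α * m := Nat.mul_le_mul_right m hα2
      have h2 : 2 * m' ≤ p * m' := Nat.mul_le_mul_right m' hp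
      omega
    have hPm : PerS d m (PW α m (zSeq z)) :=
      pow_perS hα hα1 (dep_zSeq z) (fun _ => rfl)
    have hPm' : PerS d m' (PW α m (zSeq z)) :=
      pow_perS hpm (by omega) hu heq
    -- apply FW, sorted
    have main : ∃ w X, Dep g w ∧ Dep (d - m) X ∧
        (∀ t, PW α m (zSeq z) t = PW (m / g) g w t * X (sh m t)) := by
      rcases le_or_gt m m' with hc | hc
      · obtain ⟨w, X, Y, hw, hX, hY, i1, i2⟩ :=
          FW (m + m') m m' d (PW α m (zSeq z)) (le_refl _) hm hc hsum
            ⟨a₀, hFz⟩ hPm hPm'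
        exact ⟨w, X, hw, hX, i1⟩
      · obtain ⟨w, Y, X, hw, hY, hX, i2, i1⟩ :=
          FW (m + m') m' m d (PW α m (zSeq z)) (by omega) hm' (le_of_lt hc) (by omega)
            ⟨a₀, hFz⟩ hPm' hPm
        rw [Nat.gcd_comm m' m] at hw i1 i2
        exact ⟨w, X, hw, hX, i1⟩
    obtain ⟨w, X, hw, hX, i1⟩ := main
    -- Fz also splits at m with head factor zSeq z
    have split : ∀ t, PW α m (zSeq z) t
        = zSeq z t * PW (α - 1) m (zSeq z) (sh m t) := by
      intro t
      have h1 : α = 1 + (α - 1) := by omega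
      rw [show PW α m (zSeq z) t = PW (1 + (α - 1)) m (zSeq z) t from by rw [← h1]]
      rw [PW_split, PW_one, one_mul]
    have heq2 : ∀ σ, zSeq z σ * PW (α - 1) m (zSeq z) (sh m σ)
        = PW (m / g) g w σ * X (sh m σ) := by
      intro σ
      rw [← split, i1]
    have hrg : m / g * g = m := Nat.div_mul_cancel hgm
    have hPWdep : Dep m (PW (m / g) g w) := by
      have := dep_PW (k := m / g) hw
      rwa [hrg] at this
    have hnz0 : zSeq z a₀ * PW (α - 1) m (zSeq z) (sh m a₀) ≠ 0 := by
      rw [← split]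
      exact hFz
    obtain ⟨γ, hγ0, hzw⟩ := cut_unique (dep_zSeq z) hPWdep heq2 hnz0
    exact hznp (periodic_of_seq_pow hn hg1 hmg2 hrg hz hw hzw)


lemma PW_head_split {r p : ℕ} (G : (ℕ → Fin n) → ℂ) (hp : 1 ≤ p) (t : ℕ → Fin n) :
    PW p r G t = G t * PW (p - 1) r G (sh r t) := by
  obtain ⟨q, rfl⟩ : ∃ q, p = q + 1 := ⟨p - 1, by omega⟩
  unfold PW
  rw [Finset.prod_range_succ']
  simp only [Nat.add_sub_cancel, zero_mul, sh_zero]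
  rw [mul_comm]
  congr 1
  refine Finset.prod_congr rfl fun i _ => ?_
  rw [sh_sh]
  congr 2
  ring

lemma PW_gl {r p : ℕ} {G : (ℕ → Fin n) → ℂ} (hG : Dep r G) (hp : 1 ≤ p)
    (h t : ℕ → Fin n) :
    PW p r G (gl r h t) = G h * PW (p - 1) r G t := by
  obtain ⟨q, rfl⟩ : ∃ q, p = q + 1 := ⟨p - 1, by omega⟩
  unfold PW
  rw [Finset.prod_range_succ']
  simp only [Nat.add_sub_cancel, zero_mul, sh_zero]
  rw [mul_comm]
  congr 1
  · exact hG _ _ fun i hi => gl_eq_self_lt hi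
  · refine Finset.prod_congr rfl fun i _ => ?_
    rw [sh_gl_of_ge (by nlinarith : r ≤ (i+1) * r),
      show (i+1) * r - r = i * r from by
        have h5 : (i+1) * r = i * r + r := by ring
        omega]

/-! ### pairing of alphabets -/

def dvF (n n' : ℕ) (hn' : 0 < n') (a : Fin (n * n')) : Fin n :=
  ⟨(a : ℕ) / n', Nat.div_lt_of_lt_mul (by rw [mul_comm n' n]; exact a.isLt)⟩

def mdF (n n' : ℕ) (hn' : 0 < n') (a : Fin (n * n')) : Fin n' :=
  ⟨(a : ℕ) % n', Nat.mod_lt _ hn'⟩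

def pairF (n n' : ℕ) (a : Fin n) (b : Fin n') : Fin (n * n') :=
  ⟨(a : ℕ) * n' + b, by have h1 := a.isLt; have h2 := b.isLt; nlinarith⟩

lemma dvF_pairF (n n' : ℕ) (hn' : 0 < n') (a : Fin n) (b : Fin n') :
    dvF n n' hn' (pairF n n' a b) = a := by
  apply Fin.ext
  unfold dvF pairF
  simp only []
  rw [show (a : ℕ) * n' + (b : ℕ) = n' * a + b from by ring,
    Nat.mul_add_div hn', Nat.div_eq_of_lt b.isLt, add_zero]

lemma mdF_pairF (n n' : ℕ) (hn' : 0 < n') (a : Fin n) (b : Fin n') :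
    mdF n n' hn' (pairF n n' a b) = b := by
  apply Fin.ext
  unfold mdF pairF
  simp only []
  rw [show (a : ℕ) * n' + (b : ℕ) = n' * a + b from by ring,
    Nat.mul_add_mod, Nat.mod_eq_of_lt b.isLt]

def pairSeq (n n' : ℕ) (a : ℕ → Fin n) (b : ℕ → Fin n') : ℕ → Fin (n * n') :=
  fun i => pairF n n' (a i) (b i)

lemma pairSeq_gl (n n' : ℕ) (r : ℕ) (a ta : ℕ → Fin n) (b tb : ℕ → Fin n') :
    pairSeq n n' (gl r a ta) (gl r b tb) = gl r (pairSeq n n' a b) (pairSeq n n' ta tb) := by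
  funext i
  unfold pairSeq gl
  by_cases hi : i < r
  · rw [if_pos hi, if_pos hi, if_pos hi]
  · rw [if_neg hi, if_neg hi, if_neg hi]

lemma zSeq_box {n n' m : ℕ} (hn' : 0 < n') (Z : Vnm n m) (Y : Vnm n' m)
    (s : ℕ → Fin (n * n')) :
    zSeq (boxTensV Z Y) s
      = zSeq Z (fun i => dvF n n' hn' (s i)) * zSeq Y (fun i => mdF n n' hn' (s i)) := rfl

/-- The main nonperiodicity argument. -/
lemma nonperiodic_starV {n n' m l : ℕ} (hn : 0 < n) (hn' : 0 < n')
    (hm : 1 ≤ m) (hl : 1 ≤ l)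
    (z : Vnm n m) (y : Vnm n' l) (hz : ‖z‖ = 1) (hy : ‖y‖ = 1)
    (hznp : ¬ PeriodicV z) (hynp : ¬ PeriodicV y) : ¬ PeriodicV (starV z y) := by
  intro hper
  obtain ⟨m', p, x, hpm, hx1, hp2, hcast⟩ := hper
  have hd1 : 1 ≤ Nat.lcm m l := Nat.pos_of_ne_zero (Nat.lcm_ne_zero (by omega) (by omega))
  have hα : Nat.lcm m l / m * m = Nat.lcm m l := Nat.div_mul_cancel (Nat.dvd_lcm_left m l)
  have hβ : Nat.lcm m l / l * l = Nat.lcm m l := Nat.div_mul_cancel (Nat.dvd_lcm_right m l)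
  have hm' : 1 ≤ m' := by
    rcases Nat.eq_zero_or_pos m' with h | h
    · rw [h, mul_zero] at hpm; omega
    · exact h
  have hp1 : 1 ≤ p := by omega
  -- the sequence-level equation
  have EQ : ∀ s : ℕ → Fin (n * n'), PW p m' (zSeq x) s
      = PW (Nat.lcm m l / m) m (zSeq z) (fun i => dvF n n' hn' (s i))
        * PW (Nat.lcm m l / l) l (zSeq y) (fun i => mdF n n' hn' (s i)) := by
    intro s
    calc PW p m' (zSeq x) s = zSeq (castV hpm (tpowV x p)) s := (zSeq_cast_tpow hpm x s).symm
      _ = zSeq (starV z y) s := by rw [hcast]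
      _ = _ := by
          unfold starV
          rw [zSeq_box hn', zSeq_cast_tpow, zSeq_cast_tpow]
  have EQ' : ∀ (a : ℕ → Fin n) (b : ℕ → Fin n'), PW p m' (zSeq x) (pairSeq n n' a b)
      = PW (Nat.lcm m l / m) m (zSeq z) a * PW (Nat.lcm m l / l) l (zSeq y) b := by
    intro a b
    rw [EQ (pairSeq n n' a b)]
    congr 1
    · congr 1
      funext i
      exact dvF_pairF n n' hn' (a i) (b i)
    · congr 1
      funext i
      exact mdF_pairF n n' hn' (a i) (b i)
  -- nonvanishing base points
  obtain ⟨J, hJ⟩ := exists_coord_ne_zero hz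
  obtain ⟨K, hK⟩ := exists_coord_ne_zero hy
  set a₀ : ℕ → Fin n := fun i => J ⟨i % m, Nat.mod_lt _ (by omega)⟩ with ha₀
  set b₀ : ℕ → Fin n' := fun i => K ⟨i % l, Nat.mod_lt _ (by omega)⟩ with hb₀
  have hFza₀ : PW (Nat.lcm m l / m) m (zSeq z) a₀ ≠ 0 := PW_zSeq_ne_zero (by omega) hJ
  have hFyb₀ : PW (Nat.lcm m l / l) l (zSeq y) b₀ ≠ 0 := PW_zSeq_ne_zero (by omega) hK
  set sab := pairSeq n n' a₀ b₀ with hsab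
  have hPWx : PW p m' (zSeq x) sab ≠ 0 := by
    rw [EQ' a₀ b₀]
    exact mul_ne_zero hFza₀ hFyb₀
  set P := PW (p - 1) m' (zSeq x) (sh m' sab) with hP
  have hPne : P ≠ 0 := by
    have h := PW_head_split (r := m') (zSeq x) hp1 sab
    rw [h] at hPWx
    exact right_ne_zero_of_mul hPWx
  -- the factors
  set u : (ℕ → Fin n) → ℂ :=
    fun a => PW (Nat.lcm m l / m) m (zSeq z) (gl m' a (sh m' a₀)) with hu
  set v : (ℕ → Fin n') → ℂ :=
    fun b => PW (Nat.lcm m l / l) l (zSeq y) (gl m' b (sh m' b₀)) / P with hv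
  have hud : Dep m' u := by
    intro a a' h
    rw [hu]
    simp only []
    rw [gl_congr _ h]
  have hvd : Dep m' v := by
    intro b b' h
    rw [hv]
    simp only []
    rw [gl_congr _ h]
  -- elementarity
  have helem : ∀ (a : ℕ → Fin n) (b : ℕ → Fin n'),
      zSeq x (pairSeq n n' a b) = u a * v b := by
    intro a b
    have h := EQ' (gl m' a (sh m' a₀)) (gl m' b (sh m' b₀))
    rw [pairSeq_gl] at h
    have hsh : pairSeq n n' (sh m' a₀) (sh m' b₀) = sh m' sab := rfl
    rw [hsh, PW_gl (dep_zSeq x) hp1] at h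
    rw [hv]
    simp only []
    field_simp
    rw [← hP] at h
    linear_combination h
  -- z-side power equation
  have hzpow : ∀ t, PW (Nat.lcm m l / m) m (zSeq z) t
      = (PW p m' v b₀ / PW (Nat.lcm m l / l) l (zSeq y) b₀) * PW p m' u t := by
    intro t
    have h := EQ' t b₀
    have h2 : PW p m' (zSeq x) (pairSeq n n' t b₀) = PW p m' u t * PW p m' v b₀ := by
      unfold PW
      rw [← Finset.prod_mul_distrib]
      refine Finset.prod_congr rfl fun i _ => ?_
      exact helem (sh (i * m') t) (sh (i * m') b₀)
    rw [h2] at h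
    field_simp
    linear_combination -h
  -- y-side power equation
  have hypow : ∀ t, PW (Nat.lcm m l / l) l (zSeq y) t
      = (PW p m' u a₀ / PW (Nat.lcm m l / m) m (zSeq z) a₀) * PW p m' v t := by
    intro t
    have h := EQ' a₀ t
    have h2 : PW p m' (zSeq x) (pairSeq n n' a₀ t) = PW p m' u a₀ * PW p m' v t := by
      unfold PW
      rw [← Finset.prod_mul_distrib]
      refine Finset.prod_congr rfl fun i _ => ?_
      exact helem (sh (i * m') a₀) (sh (i * m') t)
    rw [h2] at h
    field_simp
    linear_combination -h
  -- absorb the scalars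
  obtain ⟨δz, hδz⟩ := IsAlgClosed.exists_pow_nat_eq
    (PW p m' v b₀ / PW (Nat.lcm m l / l) l (zSeq y) b₀) (n := p) (by omega)
  obtain ⟨δy, hδy⟩ := IsAlgClosed.exists_pow_nat_eq
    (PW p m' u a₀ / PW (Nat.lcm m l / m) m (zSeq z) a₀) (n := p) (by omega)
  have hmdvd : m ∣ m' := by
    refine dvd_of_two_powers hn hm hd1 hα hp2 hpm hz hznp
      (u := fun a => δz * u a) (fun a a' h => by simp only []; rw [hud a a' h]) fun t => ?_
    rw [PW_smul, hδz, ← hzpow t]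
  have hldvd : l ∣ m' := by
    refine dvd_of_two_powers hn' hl hd1 hβ hp2 hpm hy hynp
      (u := fun b => δy * v b) (fun b b' h => by simp only []; rw [hvd b b' h]) fun t => ?_
    rw [PW_smul, hδy, ← hypow t]
  have hlcm : Nat.lcm m l ∣ m' := Nat.lcm_dvd hmdvd hldvd
  have hle : Nat.lcm m l ≤ m' := Nat.le_of_dvd (by omega) hlcm
  have h2m' : 2 * m' ≤ p * m' := Nat.mul_le_mul_right m' hp2
  omega

end SubCuntzAux


/-- if `z ∈ V_{n,m}` and `y ∈ V_{n',l}` are nonperiodic unit vectors,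
then `z * y ∈ V_{nn',lcm(m,l)}` is a nonperiodic unit vector. -/
theorem subCuntz_stmt10 {n n' m l : ℕ} (hn : 2 ≤ n) (hn' : 2 ≤ n')
    (hm : 1 ≤ m) (hl : 1 ≤ l)
    (z : Vnm n m) (y : Vnm n' l) (hz : ‖z‖ = 1) (hy : ‖y‖ = 1)
    (hznp : ¬ PeriodicV z) (hynp : ¬ PeriodicV y) :
    ‖starV z y‖ = 1 ∧ ¬ PeriodicV (starV z y) := by
  constructor
  · exact SubCuntzAux.norm_starV (by omega) (by omega) (by omega) z y hz hy
  · exact SubCuntzAux.nonperiodic_starV (by omega) (by omega) hm hl z y hz hy hznp hynp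
end
end

section
/- Let n ≥ 2, let S₁,…,Sₙ be a Cuntz family of order n on a complex Hilbert space H, let m ≥ 1, let z = Σ_J z_J e_J be a unit vector in V_{n,m}, and let Ω ∈ H be a unit vector. Then s(z)Ω = Ω if and only if S_J* Ω = z_J Ω for every J ∈ {1,…,n}^m. -/
noncomputable section

open scoped ComplexInnerProductSpace

lemma sword_orth {H : Type*} [NormedAddCommGroup H] [InnerProductSpace ℂ H]
    [CompleteSpace H] {n : ℕ} (S : Fin n → H →L[ℂ] H)
    (hS1 : ∀ i j, (ContinuousLinearMap.adjoint (S i)).comp (S j) = if i = j then 1 else 0) :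
    ∀ (m : ℕ) (J K : Fin m → Fin n),
      (ContinuousLinearMap.adjoint (Sword S m J)).comp (Sword S m K)
        = if J = K then 1 else 0
  | 0, J, K => by
    have : J = K := Subsingleton.elim _ _
    simp [Sword, this, ContinuousLinearMap.one_def, ContinuousLinearMap.adjoint_id]
  | (m + 1), J, K => by
    have ih := sword_orth S hS1 m (fun i : Fin m => J i.succ) (fun i : Fin m => K i.succ)
    have hJK : (J = K) ↔ (J 0 = K 0 ∧ (fun i : Fin m => J i.succ) = fun i : Fin m => K i.succ) := by
      constructor
      · rintro rfl; exact ⟨rfl, rfl⟩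
      · rintro ⟨h0, ht⟩
        funext i
        cases i using Fin.cases with
        | zero => exact h0
        | succ i => exact congrFun ht i
    ext x
    simp only [Sword, ContinuousLinearMap.comp_apply, ContinuousLinearMap.adjoint_comp]
    have h1 : (ContinuousLinearMap.adjoint (S (J 0))) (S (K 0) (Sword S m (fun i => K i.succ) x))
        = (if J 0 = K 0 then (1 : H →L[ℂ] H) else 0) (Sword S m (fun i => K i.succ) x) := by
      rw [← ContinuousLinearMap.comp_apply, hS1]
    rw [h1]
    by_cases h0 : J 0 = K 0
    · rw [if_pos h0]
      by_cases ht : (fun i : Fin m => J i.succ) = fun i : Fin m => K i.succ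
      · rw [if_pos (hJK.mpr ⟨h0, ht⟩)]
        have := congrFun (congrArg DFunLike.coe ih) x
        rw [if_pos ht] at this
        simpa using this
      · rw [if_neg (fun h => ht (hJK.mp h).2)]
        have := congrFun (congrArg DFunLike.coe ih) x
        rw [if_neg ht] at this
        simpa using this
    · rw [if_neg (fun h => h0 (hJK.mp h).1)]
      simp [h0]

/-- for a Cuntz family `S` and a unit vector `Ω`,
`s(z)Ω = Ω` iff `S_J* Ω = z_J Ω` for every `J ∈ {1,…,n}^m`. -/
theorem subCuntz_stmt11 {H : Type*} [NormedAddCommGroup H] [InnerProductSpace ℂ H]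
    [CompleteSpace H] {n m : ℕ} (hn : 2 ≤ n) (hm : 1 ≤ m)
    (S : Fin n → H →L[ℂ] H) (hS : IsCuntzFamily S)
    (z : Vnm n m) (hz : ‖z‖ = 1) (Ω : H) (hΩ : ‖Ω‖ = 1) :
    sop S z Ω = Ω ↔
      ∀ J : Fin m → Fin n, ContinuousLinearMap.adjoint (Sword S m J) Ω = z J • Ω := by
  obtain ⟨hS1, hS2⟩ := hS
  have horth := sword_orth S hS1 m
  have hΩ2 : (⟪Ω, Ω⟫) = 1 := by
    rw [inner_self_eq_norm_sq_to_K, hΩ]; norm_num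
  have hz2 : ∑ J : Fin m → Fin n, (starRingEnd ℂ) (z J) * z J = 1 := by
    have : (⟪z, z⟫) = 1 := by
      rw [inner_self_eq_norm_sq_to_K, hz]; norm_num
    rw [← this, PiLp.inner_apply]
    exact Finset.sum_congr rfl (fun J _ => (RCLike.inner_apply' _ _).symm)
  constructor
  · intro h J
    have heq : ContinuousLinearMap.adjoint (Sword S m J) (sop S z Ω)
        = ContinuousLinearMap.adjoint (Sword S m J) Ω := by rw [h]
    rw [← heq, sop, ContinuousLinearMap.sum_apply, map_sum]
    have key : ∀ K : Fin m → Fin n,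
        ContinuousLinearMap.adjoint (Sword S m J) ((z K • Sword S m K) Ω)
          = if J = K then z K • Ω else 0 := by
      intro K
      rw [ContinuousLinearMap.smul_apply, map_smul]
      have hc := congrFun (congrArg DFunLike.coe (horth J K)) Ω
      rw [ContinuousLinearMap.comp_apply] at hc
      rw [hc]
      by_cases hjk : J = K
      · simp [hjk]
      · simp [hjk]
    rw [Finset.sum_congr rfl (fun K _ => key K), Finset.sum_ite_eq]
    simp
  · intro h
    have hinner : ∀ J K : Fin m → Fin n,
        (⟪Sword S m J Ω, Sword S m K Ω⟫) = if J = K then 1 else 0 := by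
      intro J K
      rw [← ContinuousLinearMap.adjoint_inner_left, ← ContinuousLinearMap.comp_apply,
        horth K J]
      by_cases hjk : J = K
      · simp [hjk, hΩ2, hΩ]
      · rw [if_neg (fun hkj => hjk hkj.symm), if_neg hjk]
        simp
    set w := sop S z Ω with hw
    have hww : (⟪w, w⟫) = 1 := by
      rw [hw, sop, ContinuousLinearMap.sum_apply, sum_inner]
      have h1 : ∀ J : Fin m → Fin n,
          (⟪(z J • Sword S m J) Ω, ∑ K : Fin m → Fin n, (z K • Sword S m K) Ω⟫)
            = (starRingEnd ℂ) (z J) * z J := by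
        intro J
        rw [inner_sum]
        have h2 : ∀ K : Fin m → Fin n,
            (⟪(z J • Sword S m J) Ω, (z K • Sword S m K) Ω⟫)
              = if J = K then (starRingEnd ℂ) (z J) * z K else 0 := by
          intro K
          rw [ContinuousLinearMap.smul_apply, ContinuousLinearMap.smul_apply,
            inner_smul_left, inner_smul_right, hinner J K]
          by_cases hjk : J = K
          · simp [hjk]
          · simp [hjk]
        rw [Finset.sum_congr rfl (fun K _ => h2 K), Finset.sum_ite_eq]
        simp
      rw [Finset.sum_congr rfl (fun J _ => h1 J), hz2]
    have hΩw : (⟪Ω, w⟫) = 1 := by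
      rw [hw, sop, ContinuousLinearMap.sum_apply, inner_sum]
      have h1 : ∀ J : Fin m → Fin n,
          (⟪Ω, (z J • Sword S m J) Ω⟫) = z J * (starRingEnd ℂ) (z J) := by
        intro J
        rw [ContinuousLinearMap.smul_apply, inner_smul_right,
          ← ContinuousLinearMap.adjoint_inner_left, h J, inner_smul_left, hΩ2]
        ring
      rw [Finset.sum_congr rfl (fun J _ => h1 J), ← hz2]
      exact Finset.sum_congr rfl (fun J _ => mul_comm _ _)
    have hwΩ : (⟪w, Ω⟫) = 1 := by
      rw [← inner_conj_symm, hΩw, map_one]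
    have hz0 : (⟪w - Ω, w - Ω⟫) = 0 := by
      rw [inner_sub_sub_self, hww, hΩw, hwΩ, hΩ2]
      ring
    have := inner_self_eq_zero.mp hz0
    rwa [sub_eq_zero] at this
end
end

section
/- Let n ≥ 2 and m ≥ 2, let S₁,…,Sₙ be a Cuntz family of order n on a complex Hilbert space H, let z and y be unit vectors in V_{n,m} that are not conjugate (z ≁ y), and let Ω_z, Ω_y ∈ H be unit vectors with s(z)Ω_z = Ω_z and s(y)Ω_y = Ω_y. Then ⟨Ω_z, S_J Ω_y⟩ = 0 for every word J with 1 ≤ |J| ≤ m−1. -/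
noncomputable section

-- ===================== auxiliary material =====================

section Aux
open ContinuousLinearMap

local notation "⟪" x ", " y "⟫" => @inner ℂ _ _ x y

variable {H : Type*} [NormedAddCommGroup H] [InnerProductSpace ℂ H] {ι : Type*}

lemma Sword_eq_prod (S : ι → H →L[ℂ] H) : ∀ (k : ℕ) (J : Fin k → ι),
    Sword S k J = ((List.ofFn J).map S).prod
  | 0, J => by simp [Sword]
  | (k+1), J => by
      rw [Sword, List.ofFn_succ, List.map_cons, List.prod_cons, Sword_eq_prod S k]
      rfl

/-- join two words along `h : m = k + l` -/
def joinW {m k l : ℕ} (h : m = k + l) (J : Fin k → ι) (K : Fin l → ι) :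
    Fin m → ι := fun i => Fin.append J K (Fin.cast h i)

def restL {m k l : ℕ} (h : m = k + l) (B : Fin m → ι) : Fin k → ι :=
  fun i => B (Fin.cast h.symm (Fin.castAdd l i))

def restR {m k l : ℕ} (h : m = k + l) (B : Fin m → ι) : Fin l → ι :=
  fun i => B (Fin.cast h.symm (Fin.natAdd k i))

@[simp] lemma restL_joinW {m k l : ℕ} (h : m = k + l)
    (J : Fin k → ι) (K : Fin l → ι) : restL h (joinW h J K) = J := by
  funext i; simp [restL, joinW, Fin.append_left]

@[simp] lemma restR_joinW {m k l : ℕ} (h : m = k + l)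
    (J : Fin k → ι) (K : Fin l → ι) : restR h (joinW h J K) = K := by
  funext i; simp [restR, joinW, Fin.append_right]

lemma joinW_rest {m k l : ℕ} (h : m = k + l) (B : Fin m → ι) :
    joinW h (restL h B) (restR h B) = B := by
  funext i
  have key : ∀ j : Fin (k + l),
      Fin.append (restL h B) (restR h B) j = B (Fin.cast h.symm j) := by
    intro j
    refine Fin.addCases (fun p => ?_) (fun p => ?_) j
    · rw [Fin.append_left]; rfl
    · rw [Fin.append_right]; rfl
  have h2 := key (Fin.cast h i)
  simp only [Fin.cast_cast, Fin.cast_eq_self] at h2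
  exact h2

def splitEquiv {m k l : ℕ} (h : m = k + l) :
    ((Fin k → ι) × (Fin l → ι)) ≃ (Fin m → ι) where
  toFun p := joinW h p.1 p.2
  invFun B := (restL h B, restR h B)
  left_inv p := by simp
  right_inv B := joinW_rest h B

lemma sum_split [Fintype ι] {β : Type*} [AddCommMonoid β]
    {m k l : ℕ} (h : m = k + l) (f : (Fin m → ι) → β) :
    ∑ B : Fin m → ι, f B = ∑ J : Fin k → ι, ∑ K : Fin l → ι, f (joinW h J K) := by
  rw [← Equiv.sum_comp (splitEquiv (ι := ι) h) f, Fintype.sum_prod_type]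
  rfl

lemma Sword_joinW (S : ι → H →L[ℂ] H) {M k l : ℕ} (h : M = k + l)
    (J : Fin k → ι) (K : Fin l → ι) :
    Sword S M (joinW h J K) = (Sword S k J).comp (Sword S l K) := by
  subst h
  rw [Sword_eq_prod, Sword_eq_prod, Sword_eq_prod]
  have : (List.ofFn (joinW rfl J K)) = List.ofFn J ++ List.ofFn K := by
    rw [show joinW rfl J K = Fin.append J K from funext fun i => rfl]
    rw [List.ofFn_add]
    simp [Fin.append_left, Fin.append_right]
  rw [this, List.map_append, List.prod_append]
  rfl

variable [CompleteSpace H]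

lemma Sword_orth {n : ℕ} (S : Fin n → H →L[ℂ] H)
    (hS1 : ∀ i j, (ContinuousLinearMap.adjoint (S i)).comp (S j) = if i = j then 1 else 0) :
    ∀ (k : ℕ) (A C : Fin k → Fin n),
      (ContinuousLinearMap.adjoint (Sword S k A)).comp (Sword S k C) =
        if A = C then 1 else 0
  | 0, A, C => by
      have : A = C := funext fun i => i.elim0
      simp [Sword, this, ContinuousLinearMap.one_def, adjoint_id]
  | (k+1), A, C => by
      rw [Sword, Sword, adjoint_comp, comp_assoc, ← comp_assoc (adjoint (S (A 0))), hS1]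
      by_cases h0 : A 0 = C 0
      · rw [if_pos h0,
          show ((1 : H →L[ℂ] H).comp (Sword S k fun i => C i.succ))
            = Sword S k (fun i => C i.succ) from rfl,
          Sword_orth S hS1 k]
        by_cases ht : (fun i : Fin k => A i.succ) = (fun i : Fin k => C i.succ)
        · rw [if_pos ht, if_pos]
          funext i
          refine Fin.cases h0 (fun j => ?_) i
          exact congrFun ht j
        · rw [if_neg ht, if_neg]
          intro hAC
          exact ht (funext fun j => congrFun hAC j.succ)
      · rw [if_neg h0, zero_comp, comp_zero, if_neg]
        intro hAC
        exact h0 (congrFun hAC 0)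

lemma euc_inner {I : Type*} [Fintype I] (x y : EuclideanSpace ℂ I) :
    ⟪x, y⟫ = ∑ i, (starRingEnd ℂ) (x i) * y i := by
  simp [PiLp.inner_apply, RCLike.inner_apply]
  exact Finset.sum_congr rfl fun i _ => mul_comm _ _

lemma euc_normsq {I : Type*} [Fintype I] (x : EuclideanSpace ℂ I) :
    ‖x‖ ^ 2 = ∑ i, ‖x i‖ ^ 2 := by
  rw [EuclideanSpace.norm_eq, Real.sq_sqrt (by positivity)]

end Aux

set_option maxHeartbeats 1000000 in
/-- for non-conjugate unit vectors `z, y ∈ V_{n,m}` (`m ≥ 2`) with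
`s(z)Ω_z = Ω_z` and `s(y)Ω_y = Ω_y`, one has `⟨Ω_z, S_J Ω_y⟩ = 0` for `1 ≤ |J| ≤ m−1`. -/
theorem subCuntz_stmt14 {H : Type*} [NormedAddCommGroup H] [InnerProductSpace ℂ H]
    [CompleteSpace H] {n m : ℕ} (hn : 2 ≤ n) (hm : 2 ≤ m)
    (S : Fin n → H →L[ℂ] H) (hS : IsCuntzFamily S)
    (z y : Vnm n m) (hz : ‖z‖ = 1) (hy : ‖y‖ = 1)
    (hnc : ¬ ConjVec z y)
    (Ωz Ωy : H) (hΩz : ‖Ωz‖ = 1) (hΩy : ‖Ωy‖ = 1)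
    (hfixz : sop S z Ωz = Ωz) (hfixy : sop S y Ωy = Ωy) :
    ∀ (k : ℕ), 1 ≤ k → k ≤ m - 1 → ∀ J : Fin k → Fin n,
      (inner ℂ Ωz (Sword S k J Ωy) : ℂ) = 0 := by
  intro k _hk1 hk2
  by_contra hcon
  push_neg at hcon
  obtain ⟨J0, hJ0⟩ := hcon
  have hma : m = k + (m - k) := by omega
  set a : ℕ := m - k with ha
  have ham : m = a + k := by omega
  set c : EuclideanSpace ℂ (Fin k → Fin n) :=
    WithLp.toLp 2 (fun J => (inner ℂ Ωz (Sword S k J Ωy) : ℂ)) with hc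
  have hc0 : c ≠ 0 := by
    intro h
    exact hJ0 (by rw [show (inner ℂ Ωz (Sword S k J0 Ωy) : ℂ) = c J0 from rfl, h]; rfl)
  have hcn0 : ‖c‖ ≠ 0 := by simpa using hc0
  have hcpos : (0:ℝ) < ‖c‖ := lt_of_le_of_ne (norm_nonneg c) (Ne.symm hcn0)
  have orth := Sword_orth S hS.1
  -- the key self-consistency relation
  have key : ∀ J : Fin k → Fin n, c J =
      ∑ K : Fin a → Fin n, ∑ L : Fin k → Fin n,
        (starRingEnd ℂ) (z (joinW hma J K)) * (y (joinW ham K L) * c L) := by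
    intro J
    have hBv : ∀ B : Fin m → Fin n,
        Sword S m B = (Sword S a (restL ham B)).comp (Sword S k (restR ham B)) := by
      intro B
      conv_lhs => rw [← joinW_rest ham B]
      exact Sword_joinW S ham _ _
    have term : ∀ A B : Fin m → Fin n,
        (inner ℂ (Sword S m A Ωz) (Sword S k J (Sword S m B Ωy)) : ℂ)
          = if A = joinW hma J (restL ham B) then c (restR ham B) else 0 := by
      intro A B
      rw [hBv B]
      have h1 : Sword S k J (((Sword S a (restL ham B)).comp (Sword S k (restR ham B))) Ωy)
          = Sword S m (joinW hma J (restL ham B)) (Sword S k (restR ham B) Ωy) := by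
        rw [Sword_joinW S hma]
        rfl
      rw [h1, ← ContinuousLinearMap.adjoint_inner_right]
      have h2 : (ContinuousLinearMap.adjoint (Sword S m A))
            (Sword S m (joinW hma J (restL ham B)) (Sword S k (restR ham B) Ωy))
          = (if A = joinW hma J (restL ham B) then (1 : H →L[ℂ] H) else 0)
              (Sword S k (restR ham B) Ωy) := by
        rw [← ContinuousLinearMap.comp_apply, orth]
      rw [h2]
      by_cases hA : A = joinW hma J (restL ham B)
      · rw [if_pos hA, if_pos hA]
        rfl
      · rw [if_neg hA, if_neg hA]
        show (inner ℂ Ωz ((0 : H →L[ℂ] H) (Sword S k (restR ham B) Ωy)) : ℂ) = 0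
        rw [ContinuousLinearMap.zero_apply, inner_zero_right]
    calc c J = (inner ℂ (sop S z Ωz) (Sword S k J (sop S y Ωy)) : ℂ) := by
          rw [hfixz, hfixy]
      _ = ∑ A, (starRingEnd ℂ) (z A) *
            (inner ℂ (Sword S m A Ωz) (Sword S k J (sop S y Ωy)) : ℂ) := by
          rw [show sop S z Ωz = ∑ A, z A • Sword S m A Ωz from by
            rw [sop, ContinuousLinearMap.sum_apply]
            exact Finset.sum_congr rfl fun A _ => ContinuousLinearMap.smul_apply _ _ _]
          rw [sum_inner]
          exact Finset.sum_congr rfl fun A _ => inner_smul_left _ _ _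
      _ = ∑ A, (starRingEnd ℂ) (z A) * ∑ B, y B *
            (inner ℂ (Sword S m A Ωz) (Sword S k J (Sword S m B Ωy)) : ℂ) := by
          refine Finset.sum_congr rfl fun A _ => ?_
          congr 1
          have hexp : Sword S k J (sop S y Ωy) = ∑ B, y B • Sword S k J (Sword S m B Ωy) := by
            rw [sop, ContinuousLinearMap.sum_apply, map_sum]
            exact Finset.sum_congr rfl fun B _ => by
              rw [ContinuousLinearMap.smul_apply, map_smul]
          rw [hexp, inner_sum]
          exact Finset.sum_congr rfl fun B _ => inner_smul_right _ _ _
      _ = ∑ A, (starRingEnd ℂ) (z A) * ∑ B, y B *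
            (if A = joinW hma J (restL ham B) then c (restR ham B) else 0) :=
          Finset.sum_congr rfl fun A _ => by
            congr 1
            exact Finset.sum_congr rfl fun B _ => by rw [term A B]
      _ = ∑ B, (starRingEnd ℂ) (z (joinW hma J (restL ham B))) *
            (y B * c (restR ham B)) := by
          simp only [Finset.mul_sum]
          rw [Finset.sum_comm]
          refine Finset.sum_congr rfl fun B _ => ?_
          rw [Finset.sum_eq_single_of_mem (joinW hma J (restL ham B)) (Finset.mem_univ _)
            (fun A _ hA => by rw [if_neg hA, mul_zero, mul_zero])]
          rw [if_pos rfl]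
      _ = ∑ K, ∑ L, (starRingEnd ℂ) (z (joinW hma J K)) * (y (joinW ham K L) * c L) := by
          rw [sum_split ham (fun B => (starRingEnd ℂ) (z (joinW hma J (restL ham B))) *
            (y B * c (restR ham B)))]
          exact Finset.sum_congr rfl fun K _ => Finset.sum_congr rfl fun L _ => by
            rw [restL_joinW, restR_joinW]
  -- auxiliary vectors
  set u : EuclideanSpace ℂ (Fin k → Fin n) := WithLp.toLp 2 (fun J => (starRingEnd ℂ) (c J)) with hu
  set zc : (Fin a → Fin n) → EuclideanSpace ℂ (Fin k → Fin n) :=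
    (fun K => WithLp.toLp 2 fun J => z (joinW hma J K)) with hzc
  set yr : (Fin a → Fin n) → EuclideanSpace ℂ (Fin k → Fin n) :=
    (fun K => WithLp.toLp 2 fun L => y (joinW ham K L)) with hyr
  set al : EuclideanSpace ℂ (Fin a → Fin n) := WithLp.toLp 2 (fun K => (inner ℂ u (zc K) : ℂ)) with hal
  set be : EuclideanSpace ℂ (Fin a → Fin n) := WithLp.toLp 2 (fun K => (inner ℂ u (yr K) : ℂ)) with hbe
  have hnu : ‖u‖ = ‖c‖ := by
    rw [EuclideanSpace.norm_eq, EuclideanSpace.norm_eq]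
    congr 1
    exact Finset.sum_congr rfl fun J _ => by rw [hu]; simp
  have hu0 : u ≠ 0 := by
    intro h; rw [h, norm_zero] at hnu; exact hcn0 hnu.symm
  -- Frobenius norms of the two matricizations
  have hzsum : (∑ K : Fin a → Fin n, ∑ J : Fin k → Fin n, ‖z (joinW hma J K)‖ ^ 2) = 1 := by
    have h1 := euc_normsq z
    rw [hz, one_pow] at h1
    rw [Finset.sum_comm, ← sum_split hma (fun A => ‖z A‖ ^ 2)]
    exact h1.symm
  have hysum : (∑ K : Fin a → Fin n, ∑ L : Fin k → Fin n, ‖y (joinW ham K L)‖ ^ 2) = 1 := by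
    have h1 := euc_normsq y
    rw [hy, one_pow] at h1
    rw [← sum_split ham (fun A => ‖y A‖ ^ 2)]
    exact h1.symm
  -- ⟪c,c⟫ = ⟪al,be⟫
  have hAB : (inner ℂ al be : ℂ) = (inner ℂ c c : ℂ) := by
    rw [euc_inner al be, euc_inner c c]
    calc ∑ K, (starRingEnd ℂ) (al K) * be K
        = ∑ K : Fin a → Fin n,
            (∑ J, (starRingEnd ℂ) (c J) * (starRingEnd ℂ) (z (joinW hma J K))) *
            (∑ L, c L * y (joinW ham K L)) := by
          refine Finset.sum_congr rfl fun K _ => ?_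
          congr 1
          · rw [show al K = (inner ℂ u (zc K) : ℂ) from rfl, euc_inner, map_sum]
            refine Finset.sum_congr rfl fun J _ => ?_
            rw [map_mul, Complex.conj_conj]
          · rw [show be K = (inner ℂ u (yr K) : ℂ) from rfl, euc_inner]
            refine Finset.sum_congr rfl fun L _ => ?_
            show (starRingEnd ℂ) (u L) * yr K L = c L * y (joinW ham K L)
            rw [show (starRingEnd ℂ) (u L) = c L from Complex.conj_conj (c L)]
      _ = ∑ K : Fin a → Fin n, ∑ J : Fin k → Fin n, ∑ L : Fin k → Fin n,
            ((starRingEnd ℂ) (c J) * (starRingEnd ℂ) (z (joinW hma J K))) *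
              (c L * y (joinW ham K L)) := by
          refine Finset.sum_congr rfl fun K _ => ?_
          rw [Finset.sum_mul]
          exact Finset.sum_congr rfl fun J _ => by rw [Finset.mul_sum]
      _ = ∑ J : Fin k → Fin n, ∑ K : Fin a → Fin n, ∑ L : Fin k → Fin n,
            ((starRingEnd ℂ) (c J) * (starRingEnd ℂ) (z (joinW hma J K))) *
              (c L * y (joinW ham K L)) := Finset.sum_comm
      _ = ∑ J : Fin k → Fin n, (starRingEnd ℂ) (c J) *
            ∑ K : Fin a → Fin n, ∑ L : Fin k → Fin n,
              (starRingEnd ℂ) (z (joinW hma J K)) * (y (joinW ham K L) * c L) := by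
          refine Finset.sum_congr rfl fun J _ => ?_
          rw [Finset.mul_sum]
          refine Finset.sum_congr rfl fun K _ => ?_
          rw [Finset.mul_sum]
          exact Finset.sum_congr rfl fun L _ => by ring
      _ = ∑ J, (starRingEnd ℂ) (c J) * c J :=
          Finset.sum_congr rfl fun J _ => by rw [← key J]
  -- norm bounds
  have hzcK : ∀ K, ‖zc K‖ ^ 2 = ∑ J, ‖z (joinW hma J K)‖ ^ 2 := fun K => euc_normsq (zc K)
  have hyrK : ∀ K, ‖yr K‖ ^ 2 = ∑ L, ‖y (joinW ham K L)‖ ^ 2 := fun K => euc_normsq (yr K)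
  have halK : ∀ K, ‖al K‖ ^ 2 ≤ ‖u‖ ^ 2 * ‖zc K‖ ^ 2 := by
    intro K
    have h1 := norm_inner_le_norm (𝕜 := ℂ) u (zc K)
    have h2 := pow_le_pow_left₀ (norm_nonneg _) h1 2
    rw [mul_pow] at h2
    exact h2
  have hbeK : ∀ K, ‖be K‖ ^ 2 ≤ ‖u‖ ^ 2 * ‖yr K‖ ^ 2 := by
    intro K
    have h1 := norm_inner_le_norm (𝕜 := ℂ) u (yr K)
    have h2 := pow_le_pow_left₀ (norm_nonneg _) h1 2
    rw [mul_pow] at h2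
    exact h2
  have halsum : (∑ K, ‖u‖ ^ 2 * ‖zc K‖ ^ 2) = ‖c‖ ^ 2 := by
    rw [← Finset.mul_sum]
    have : (∑ K, ‖zc K‖ ^ 2) = 1 := by
      rw [← hzsum]; exact Finset.sum_congr rfl fun K _ => hzcK K
    rw [this, mul_one, hnu]
  have hbesum : (∑ K, ‖u‖ ^ 2 * ‖yr K‖ ^ 2) = ‖c‖ ^ 2 := by
    rw [← Finset.mul_sum]
    have : (∑ K, ‖yr K‖ ^ 2) = 1 := by
      rw [← hysum]; exact Finset.sum_congr rfl fun K _ => hyrK K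
    rw [this, mul_one, hnu]
  have halle : ‖al‖ ^ 2 ≤ ‖c‖ ^ 2 := by
    rw [euc_normsq al, ← halsum]
    exact Finset.sum_le_sum fun K _ => halK K
  have hbele : ‖be‖ ^ 2 ≤ ‖c‖ ^ 2 := by
    rw [euc_normsq be, ← hbesum]
    exact Finset.sum_le_sum fun K _ => hbeK K
  have hcc : (inner ℂ c c : ℂ) = ((‖c‖ : ℂ)) ^ 2 := inner_self_eq_norm_sq_to_K c
  have hineq : ‖c‖ ^ 2 ≤ ‖al‖ * ‖be‖ := by
    have h1 : ‖(inner ℂ al be : ℂ)‖ = ‖c‖ ^ 2 := by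
      rw [hAB, hcc]
      simp [norm_pow]
    rw [← h1]
    exact norm_inner_le_norm al be
  have hale : ‖al‖ ≤ ‖c‖ :=
    (pow_le_pow_iff_left₀ (norm_nonneg al) (norm_nonneg c) two_ne_zero).1 halle
  have hble : ‖be‖ ≤ ‖c‖ :=
    (pow_le_pow_iff_left₀ (norm_nonneg be) (norm_nonneg c) two_ne_zero).1 hbele
  have hna : ‖al‖ = ‖c‖ := by
    refine le_antisymm hale ?_
    have h1 : ‖al‖ * ‖be‖ ≤ ‖al‖ * ‖c‖ := mul_le_mul_of_nonneg_left hble (norm_nonneg al)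
    have h2 : ‖c‖ * ‖c‖ ≤ ‖al‖ * ‖c‖ := by nlinarith
    exact le_of_mul_le_mul_right h2 hcpos
  have hnb : ‖be‖ = ‖c‖ := by
    refine le_antisymm hble ?_
    have h1 : ‖al‖ * ‖be‖ ≤ ‖c‖ * ‖be‖ := mul_le_mul_of_nonneg_right hale (norm_nonneg be)
    have h2 : ‖c‖ * ‖c‖ ≤ ‖c‖ * ‖be‖ := by nlinarith
    have h3 := le_of_mul_le_mul_right (by nlinarith : ‖c‖ * ‖c‖ ≤ ‖be‖ * ‖c‖) hcpos
    exact h3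
  -- per-column equality in Cauchy–Schwarz
  have haleq : ∀ K, ‖al K‖ ^ 2 = ‖u‖ ^ 2 * ‖zc K‖ ^ 2 := by
    have hsum : (∑ K, ‖al K‖ ^ 2) = ∑ K, ‖u‖ ^ 2 * ‖zc K‖ ^ 2 := by
      rw [halsum, ← euc_normsq al, hna]
    intro K
    exact (Finset.sum_eq_sum_iff_of_le (fun K _ => halK K)).1 hsum K (Finset.mem_univ K)
  have hbeeq : ∀ K, ‖be K‖ ^ 2 = ‖u‖ ^ 2 * ‖yr K‖ ^ 2 := by
    have hsum : (∑ K, ‖be K‖ ^ 2) = ∑ K, ‖u‖ ^ 2 * ‖yr K‖ ^ 2 := by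
      rw [hbesum, ← euc_normsq be, hnb]
    intro K
    exact (Finset.sum_eq_sum_iff_of_le (fun K _ => hbeK K)).1 hsum K (Finset.mem_univ K)
  have hcol : ∀ K, ∃ r : ℂ, zc K = r • u := by
    intro K
    by_cases h0 : zc K = 0
    · exact ⟨0, by rw [h0, zero_smul]⟩
    · have heqn : ‖(inner ℂ u (zc K) : ℂ)‖ = ‖u‖ * ‖zc K‖ := by
        have h2 : ‖(inner ℂ u (zc K) : ℂ)‖ ^ 2 = (‖u‖ * ‖zc K‖) ^ 2 := by
          rw [mul_pow]; exact haleq K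
        exact (sq_eq_sq₀ (norm_nonneg _)
          (mul_nonneg (norm_nonneg u) (norm_nonneg (zc K)))).1 h2
      obtain ⟨r, _, hr⟩ := (norm_inner_eq_norm_iff hu0 h0).1 heqn
      exact ⟨r, hr⟩
  have hrow : ∀ K, ∃ r : ℂ, yr K = r • u := by
    intro K
    by_cases h0 : yr K = 0
    · exact ⟨0, by rw [h0, zero_smul]⟩
    · have heqn : ‖(inner ℂ u (yr K) : ℂ)‖ = ‖u‖ * ‖yr K‖ := by
        have h2 : ‖(inner ℂ u (yr K) : ℂ)‖ ^ 2 = (‖u‖ * ‖yr K‖) ^ 2 := by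
          rw [mul_pow]; exact hbeeq K
        exact (sq_eq_sq₀ (norm_nonneg _)
          (mul_nonneg (norm_nonneg u) (norm_nonneg (yr K)))).1 h2
      obtain ⟨r, _, hr⟩ := (norm_inner_eq_norm_iff hu0 h0).1 heqn
      exact ⟨r, hr⟩
  choose μ0 hμ0 using hcol
  choose ν0 hν0 using hrow
  set μ : EuclideanSpace ℂ (Fin a → Fin n) := WithLp.toLp 2 μ0 with hμd
  set ν : EuclideanSpace ℂ (Fin a → Fin n) := WithLp.toLp 2 ν0 with hνd
  have hμ : ∀ K, zc K = μ K • u := hμ0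
  have hν : ∀ K, yr K = ν K • u := hν0
  have hzJK : ∀ (J : Fin k → Fin n) (K : Fin a → Fin n),
      z (joinW hma J K) = μ K * (starRingEnd ℂ) (c J) := by
    intro J K
    have h1 : zc K J = (μ K • u) J := by rw [← hμ K]
    rw [show zc K J = z (joinW hma J K) from rfl] at h1
    rw [h1]
    rfl
  have hyKL : ∀ (K : Fin a → Fin n) (L : Fin k → Fin n),
      y (joinW ham K L) = ν K * (starRingEnd ℂ) (c L) := by
    intro K L
    have h1 : yr K L = (ν K • u) L := by rw [← hν K]
    rw [show yr K L = y (joinW ham K L) from rfl] at h1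
    rw [h1]
    rfl
  -- norm identities for μ and ν
  have hmusq : ‖μ‖ ^ 2 * ‖c‖ ^ 2 = 1 := by
    have h1 : ∀ (K : Fin a → Fin n) (J : Fin k → Fin n),
        ‖z (joinW hma J K)‖ ^ 2 = ‖μ K‖ ^ 2 * ‖c J‖ ^ 2 := by
      intro K J
      rw [hzJK J K, norm_mul, RCLike.norm_conj, mul_pow]
    calc ‖μ‖ ^ 2 * ‖c‖ ^ 2 = (∑ K, ‖μ K‖ ^ 2) * (∑ J, ‖c J‖ ^ 2) := by
          rw [euc_normsq, euc_normsq]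
      _ = ∑ K, ∑ J, ‖μ K‖ ^ 2 * ‖c J‖ ^ 2 := by rw [Finset.sum_mul_sum]
      _ = ∑ K, ∑ J, ‖z (joinW hma J K)‖ ^ 2 :=
          Finset.sum_congr rfl fun K _ => Finset.sum_congr rfl fun J _ => (h1 K J).symm
      _ = 1 := hzsum
  have hnusq : ‖ν‖ ^ 2 * ‖c‖ ^ 2 = 1 := by
    have h1 : ∀ (K : Fin a → Fin n) (L : Fin k → Fin n),
        ‖y (joinW ham K L)‖ ^ 2 = ‖ν K‖ ^ 2 * ‖c L‖ ^ 2 := by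
      intro K L
      rw [hyKL K L, norm_mul, RCLike.norm_conj, mul_pow]
    calc ‖ν‖ ^ 2 * ‖c‖ ^ 2 = (∑ K, ‖ν K‖ ^ 2) * (∑ L, ‖c L‖ ^ 2) := by
          rw [euc_normsq, euc_normsq]
      _ = ∑ K, ∑ L, ‖ν K‖ ^ 2 * ‖c L‖ ^ 2 := by rw [Finset.sum_mul_sum]
      _ = ∑ K, ∑ L, ‖y (joinW ham K L)‖ ^ 2 :=
          Finset.sum_congr rfl fun K _ => Finset.sum_congr rfl fun L _ => (h1 K L).symm
      _ = 1 := hysum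
  have hmun : ‖μ‖ * ‖c‖ = 1 := by
    have h2 : (‖μ‖ * ‖c‖) ^ 2 = 1 ^ 2 := by rw [mul_pow, one_pow]; exact hmusq
    exact (sq_eq_sq₀ (mul_nonneg (norm_nonneg μ) (norm_nonneg c)) zero_le_one).1 h2
  have hnun : ‖ν‖ * ‖c‖ = 1 := by
    have h2 : (‖ν‖ * ‖c‖) ^ 2 = 1 ^ 2 := by rw [mul_pow, one_pow]; exact hnusq
    exact (sq_eq_sq₀ (mul_nonneg (norm_nonneg ν) (norm_nonneg c)) zero_le_one).1 h2
  have hmu0 : ‖μ‖ ≠ 0 := by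
    intro h; rw [h, zero_mul] at hmun; norm_num at hmun
  -- μ = ν
  have hμν : μ = ν := by
    have hcC : ((‖c‖ : ℂ)) ≠ 0 := by simpa using hcn0
    have halμ : ∀ K, al K = μ K * ((‖c‖ : ℂ)) ^ 2 := by
      intro K
      show (inner ℂ u (zc K) : ℂ) = _
      rw [hμ K, inner_smul_right, inner_self_eq_norm_sq_to_K, hnu]
      norm_cast
    have hbeν : ∀ K, be K = ν K * ((‖c‖ : ℂ)) ^ 2 := by
      intro K
      show (inner ℂ u (yr K) : ℂ) = _
      rw [hν K, inner_smul_right, inner_self_eq_norm_sq_to_K, hnu]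
      norm_cast
    have hiab : (inner ℂ al be : ℂ) = (inner ℂ μ ν : ℂ) * ((‖c‖ : ℂ)) ^ 4 := by
      rw [euc_inner al be, euc_inner μ ν, Finset.sum_mul]
      refine Finset.sum_congr rfl fun K _ => ?_
      rw [halμ K, hbeν K, map_mul]
      have hconj : (starRingEnd ℂ) (((‖c‖ : ℂ)) ^ 2) = ((‖c‖ : ℂ)) ^ 2 := by
        rw [map_pow, Complex.conj_ofReal]
      rw [hconj]
      ring
    have heq4 : (inner ℂ μ ν : ℂ) * ((‖c‖ : ℂ)) ^ 4 = ((‖c‖ : ℂ)) ^ 2 := by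
      rw [← hiab, hAB, hcc]
    have hm' : ‖μ‖ = ‖c‖⁻¹ := by
      field_simp
      linarith [hmun]
    have hn' : ‖ν‖ = ‖c‖⁻¹ := by
      field_simp
      linarith [hnun]
    have hinner : (inner ℂ μ ν : ℂ) = ((‖μ‖ : ℂ)) * ((‖ν‖ : ℂ)) := by
      have hc4 : ((‖c‖ : ℂ)) ^ 4 ≠ 0 := pow_ne_zero _ hcC
      have h5 : (inner ℂ μ ν : ℂ) = ((‖c‖ : ℂ)) ^ 2 / ((‖c‖ : ℂ)) ^ 4 :=
        (eq_div_iff hc4).2 heq4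
      rw [h5, hm', hn']
      push_cast
      field_simp
    have him := inner_eq_norm_mul_iff.1 hinner
    have hnm : ‖ν‖ = ‖μ‖ := by rw [hm', hn']
    rw [hnm] at him
    have hmuC : ((‖μ‖ : ℂ)) ≠ 0 := by simpa using hmu0
    exact smul_right_injective _ hmuC him
  -- assemble the conjugacy, contradiction
  apply hnc
  refine Or.inr ⟨k, a, WithLp.toLp 2 (fun J => ((‖c‖ : ℂ))⁻¹ * (starRingEnd ℂ) (c J)),
    WithLp.toLp 2 (fun K => ((‖c‖ : ℂ)) * μ K), hma.symm, ham.symm, ?_, ?_, ?_, ?_⟩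
  · -- ‖x₁‖ = 1
    have hx : WithLp.toLp 2 (fun J => ((‖c‖ : ℂ))⁻¹ * (starRingEnd ℂ) (c J))
        = (((‖c‖ : ℂ))⁻¹ • u : EuclideanSpace ℂ (Fin k → Fin n)) := by
      ext J; rfl
    rw [hx, norm_smul, hnu]
    simp [hcn0]
  · -- ‖x₂‖ = 1
    have hx : WithLp.toLp 2 (fun K => ((‖c‖ : ℂ)) * μ K)
        = (((‖c‖ : ℂ)) • μ : EuclideanSpace ℂ (Fin a → Fin n)) := by
      ext K; rfl
    rw [hx, norm_smul]
    simp only [Complex.norm_real, Real.norm_eq_abs, abs_of_nonneg (norm_nonneg c)]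
    rw [mul_comm]
    exact hmun
  · -- castV (tensV x₁ x₂) = z
    ext A
    have hA := hzJK (restL hma A) (restR hma A)
    rw [joinW_rest] at hA
    show (((‖c‖ : ℂ))⁻¹ * (starRingEnd ℂ) (c (restL hma A)))
        * (((‖c‖ : ℂ)) * μ (restR hma A)) = z A
    rw [hA]
    have : ((‖c‖ : ℂ)) ≠ 0 := by
      simpa using hcn0
    field_simp
  · -- castV (tensV x₂ x₁) = y
    ext A
    have hA := hyKL (restL ham A) (restR ham A)
    rw [joinW_rest] at hA
    show (((‖c‖ : ℂ)) * μ (restL ham A))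
        * (((‖c‖ : ℂ))⁻¹ * (starRingEnd ℂ) (c (restR ham A))) = y A
    rw [hA, ← hμν]
    have : ((‖c‖ : ℂ)) ≠ 0 := by
      simpa using hcn0
    field_simp
end
end

section
/- (Values of the sub-Cuntz state with nonperiodic parameter.) Let n ≥ 2 and m ≥ 1, let S₁,…,Sₙ be a Cuntz family of order n on a complex Hilbert space H, let z be a nonperiodic unit vector in V_{n,m}, and let Ω ∈ H be a unit vector with s(z)Ω = Ω. Then for all words J, K over {1,…,n} (including the empty word): (1) if |J| and |K| are both nonnegative multiples of m, then ⟨Ω, S_J S_K* Ω⟩ = conj(z_J)·z_K, where for a word J of length a multiple of m one sets z_J := z_{J^{(1)}}···z_{J^{(l)}} with J = J^{(1)}···J^{(l)}, each |J^{(i)}| = m, and z_∅ := 1; (2) if |J| − |K| is not a multiple of m, then ⟨Ω, S_J S_K* Ω⟩ = 0; (3) otherwise, writing J = J₁J₂ and K = K₁K₂ with |J₁|, |K₁| nonnegative multiples of m and 1 ≤ |J₂| = |K₂| ≤ m−1, one has ⟨Ω, S_J S_K* Ω⟩ = conj(z_{J₁})·z_{K₁}·Σ_{|L|=m−|J₂|}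 conj(z_{J₂L})·z_{K₂L}. In particular, the values ⟨Ω, S_J S_K* Ω⟩ are uniquely determined by z. -/
noncomputable section

/-! ### Auxiliary generic lemmas -/

section EuclHelpers

open Finset

lemma eucl_norm_sq {ι : Type*} [Fintype ι] (v : EuclideanSpace ℂ ι) :
    ‖v‖ ^ 2 = ∑ i, ‖v i‖ ^ 2 := by
  rw [EuclideanSpace.norm_eq, Real.sq_sqrt (by positivity)]

lemma eucl_exists_ne_zero {ι : Type*} [Fintype ι] {v : EuclideanSpace ℂ ι} (hv : v ≠ 0) :
    ∃ i, v i ≠ 0 := by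
  by_contra h
  push_neg at h
  exact hv (PiLp.ext fun i => h i)

lemma sq_eq_one_of_nonneg {a : ℝ} (h0 : 0 ≤ a) (h : a ^ 2 = 1) : a = 1 := by
  have h1 : (a - 1) * (a + 1) = 0 := by linear_combination h
  rcases mul_eq_zero.1 h1 with h2 | h2
  · linarith
  · linarith

/-- `opOf A v = A · v` for a "matrix" `A` indexed by `ι × κ`. -/
def opOf {ι κ : Type*} [Fintype κ] (A : EuclideanSpace ℂ (ι × κ))
    (v : EuclideanSpace ℂ κ) : EuclideanSpace ℂ ι :=
  WithLp.toLp 2 fun i => ∑ k, A (i, k) * v k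

/-- The `i`-th (conjugated) row of `A`. -/
def rowOf {ι κ : Type*} (A : EuclideanSpace ℂ (ι × κ)) (i : ι) : EuclideanSpace ℂ κ :=
  WithLp.toLp 2 fun k => starRingEnd ℂ (A (i, k))

lemma opOf_smul {ι κ : Type*} [Fintype κ] (A : EuclideanSpace ℂ (ι × κ))
    (c : ℂ) (v : EuclideanSpace ℂ κ) : opOf A (c • v) = c • opOf A v := by
  refine PiLp.ext fun i => ?_
  simp only [opOf, PiLp.smul_apply, smul_eq_mul, Finset.mul_sum, PiLp.toLp_apply]
  exact Finset.sum_congr rfl fun k _ => by ring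

lemma opOf_row {ι κ : Type*} [Fintype κ] (A : EuclideanSpace ℂ (ι × κ))
    (v : EuclideanSpace ℂ κ) (i : ι) :
    opOf A v i = inner ℂ (rowOf A i) v := by
  rw [PiLp.inner_apply]
  simp only [opOf, PiLp.toLp_apply]
  exact Finset.sum_congr rfl fun k _ => by
    rw [RCLike.inner_apply']; simp [rowOf]

lemma opOf_norm_le {ι κ : Type*} [Fintype ι] [Fintype κ] (A : EuclideanSpace ℂ (ι × κ))
    (v : EuclideanSpace ℂ κ) : ‖opOf A v‖ ≤ ‖A‖ * ‖v‖ := by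
  have key : ∀ i, ‖opOf A v i‖ ^ 2 ≤ (∑ k, ‖A (i, k)‖ ^ 2) * ∑ k, ‖v k‖ ^ 2 := by
    intro i
    rw [opOf_row]
    have h1 : ‖(inner ℂ (rowOf A i) v : ℂ)‖ ≤ ‖rowOf A i‖ * ‖v‖ := norm_inner_le_norm _ v
    have h2 : ‖(inner ℂ (rowOf A i) v : ℂ)‖ ^ 2 ≤ (‖rowOf A i‖ * ‖v‖) ^ 2 := by
      have := norm_nonneg (inner ℂ (rowOf A i) v : ℂ)
      nlinarith [norm_nonneg (rowOf A i), norm_nonneg v]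
    calc ‖(inner ℂ (rowOf A i) v : ℂ)‖ ^ 2 ≤ (‖rowOf A i‖ * ‖v‖) ^ 2 := h2
      _ = ‖rowOf A i‖ ^ 2 * ‖v‖ ^ 2 := by ring
      _ = (∑ k, ‖A (i, k)‖ ^ 2) * ∑ k, ‖v k‖ ^ 2 := by
          rw [eucl_norm_sq (rowOf A i), eucl_norm_sq v]
          congr 1
          exact Finset.sum_congr rfl fun k _ => by
            simp [rowOf, RCLike.norm_conj]
  have h2 : ‖opOf A v‖ ^ 2 ≤ (‖A‖ * ‖v‖) ^ 2 := by
    rw [eucl_norm_sq, mul_pow, eucl_norm_sq A, eucl_norm_sq v, Fintype.sum_prod_type]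
    calc ∑ i, ‖opOf A v i‖ ^ 2 ≤ ∑ i, (∑ k, ‖A (i, k)‖ ^ 2) * ∑ k, ‖v k‖ ^ 2 :=
          Finset.sum_le_sum fun i _ => key i
      _ = (∑ i, ∑ k, ‖A (i, k)‖ ^ 2) * ∑ k, ‖v k‖ ^ 2 := by rw [Finset.sum_mul]
  exact le_of_pow_le_pow_left₀ two_ne_zero (by positivity) h2

lemma opOf_rank_one {ι κ : Type*} [Fintype ι] [Fintype κ] (A : EuclideanSpace ℂ (ι × κ))
    (v : EuclideanSpace ℂ κ) (hA : ‖A‖ ≤ 1) (hv : ‖v‖ = 1) (hAv : ‖opOf A v‖ = 1) :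
    ∀ i k, A (i, k) = opOf A v i * starRingEnd ℂ (v k) := by
  set y := opOf A v with hy
  set B : EuclideanSpace ℂ (ι × κ) := WithLp.toLp 2 (fun p : ι × κ => y p.1 * starRingEnd ℂ (v p.2)) with hB
  have hip : (inner ℂ B A : ℂ) = 1 := by
    rw [PiLp.inner_apply, Fintype.sum_prod_type]
    have key : ∀ i, ∑ k, (inner ℂ (B (i, k)) (A (i, k)) : ℂ)
        = starRingEnd ℂ (y i) * y i := by
      intro i
      have e1 : ∀ k, (inner ℂ (B (i, k)) (A (i, k)) : ℂ)
          = starRingEnd ℂ (y i) * (A (i, k) * v k) := by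
        intro k
        simp only [RCLike.inner_apply', hB, PiLp.toLp_apply, map_mul, Complex.conj_conj]
        ring
      rw [Finset.sum_congr rfl fun k _ => e1 k, ← Finset.mul_sum]
      congr 1
    rw [Finset.sum_congr rfl fun i _ => key i]
    have e2 : (inner ℂ y y : ℂ) = ∑ i, starRingEnd ℂ (y i) * y i := by
      rw [PiLp.inner_apply]
      exact Finset.sum_congr rfl fun i _ => by rw [RCLike.inner_apply']
    rw [← e2, inner_self_eq_norm_sq_to_K, hAv]
    norm_num
  have hBnorm : ‖B‖ = 1 := by
    apply sq_eq_one_of_nonneg (norm_nonneg B)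
    rw [eucl_norm_sq, Fintype.sum_prod_type]
    have e3 : ∀ i, ∑ k, ‖B (i, k)‖ ^ 2 = ‖y i‖ ^ 2 * ∑ k, ‖v k‖ ^ 2 := by
      intro i
      rw [Finset.mul_sum]
      exact Finset.sum_congr rfl fun k _ => by
        simp only [hB, PiLp.toLp_apply, norm_mul, RCLike.norm_conj]
        ring
    rw [Finset.sum_congr rfl fun i _ => e3 i, ← Finset.sum_mul,
      ← eucl_norm_sq, ← eucl_norm_sq, hAv, hv]
    norm_num
  have hAnorm : ‖A‖ = 1 := by
    have h1 : ‖(inner ℂ B A : ℂ)‖ ≤ ‖B‖ * ‖A‖ := norm_inner_le_norm B A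
    rw [hip, hBnorm, one_mul, norm_one] at h1
    linarith
  have hBA : B = A := (inner_eq_one_iff_of_norm_eq_one hBnorm hAnorm).1 hip
  intro i k
  rw [← hBA]

end EuclHelpers
/-! ### The pointwise evaluation calculus and the combinatorial lemma -/

section Comb

open Finset

variable {n : ℕ}

/-- Evaluation of a degree-`k` tensor on the window `[o, o+k)` of `f`. -/
def evv {k : ℕ} (v : Vnm n k) (o : ℕ) (f : ℕ → Fin n) : ℂ :=
  v fun t => f (o + (t : ℕ))

lemma evv_shift {k : ℕ} (v : Vnm n k) (o c : ℕ) (f : ℕ → Fin n) :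
    evv v o (fun s => f (c + s)) = evv v (c + o) f :=
  congrArg v (funext fun t => congrArg f (by omega))

lemma evv_congr_o {k : ℕ} (v : Vnm n k) {o o' : ℕ} (h : o = o') (f : ℕ → Fin n) :
    evv v o f = evv v o' f := by rw [h]

lemma evv_zero_eq {k : ℕ} (v : Vnm n k) (J : Fin k → Fin n) (f : ℕ → Fin n)
    (hf : ∀ t : Fin k, f (t : ℕ) = J t) : evv v 0 f = v J :=
  congrArg v (funext fun t => by rw [Nat.zero_add]; exact hf t)

lemma comb_step {d e : ℕ} (hd : 1 ≤ d) (hde : d < e)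
    (u : Vnm n d) (y : Vnm n e) (hu : u ≠ 0)
    (H : ∀ f : ℕ → Fin n, evv u 0 f * evv y d f = evv y 0 f * evv u e f) :
    ∃ y'' : Vnm n (e - d),
      ∀ f, evv y 0 f = evv y'' 0 f * evv u (e - d) f := by
  obtain ⟨K₀, hK₀⟩ := eucl_exists_ne_zero hu
  refine ⟨WithLp.toLp 2 fun L => (u K₀)⁻¹ * y (fun t => if h : (t : ℕ) < d then K₀ ⟨t, h⟩
    else L ⟨(t : ℕ) - d, by omega⟩), fun f => ?_⟩
  set f' : ℕ → Fin n := fun s => if h : s < d then K₀ ⟨s, h⟩ else f (s - d) with hf'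
  have h1 : evv u 0 f' = u K₀ := by
    apply congrArg u (funext fun t => ?_)
    simp only [hf']
    rw [dif_pos (by omega : 0 + (t : ℕ) < d)]
    exact congrArg K₀ (Fin.ext (show 0 + (t : ℕ) = (t : ℕ) by omega))
  have h2 : evv y d f' = evv y 0 f := by
    apply congrArg y (funext fun t => ?_)
    simp only [hf']
    rw [dif_neg (by omega)]
    exact congrArg f (show d + (t : ℕ) - d = 0 + (t : ℕ) by omega)
  have h3 : evv u e f' = evv u (e - d) f := by
    apply congrArg u (funext fun t => ?_)
    simp only [hf']
    rw [dif_neg (by omega)]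
    exact congrArg f (show e + (t : ℕ) - d = e - d + (t : ℕ) by omega)
  have h4 : evv y 0 f' = u K₀ *
      ((u K₀)⁻¹ * y (fun t : Fin e => if h : (t : ℕ) < d then K₀ ⟨t, h⟩
        else f (0 + ((t : ℕ) - d)))) := by
    rw [← mul_assoc, mul_inv_cancel₀ hK₀, one_mul]
    apply congrArg y (funext fun t => ?_)
    simp only [hf']
    by_cases h : (t : ℕ) < d
    · rw [dif_pos (by omega : 0 + (t : ℕ) < d), dif_pos h]
      exact congrArg K₀ (Fin.ext (show 0 + (t : ℕ) = (t : ℕ) by omega))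
    · rw [dif_neg (by omega), dif_neg h]
      exact congrArg f (show 0 + (t : ℕ) - d = 0 + ((t : ℕ) - d) by omega)
  have hH := H f'
  rw [h1, h2, h3, h4] at hH
  rw [mul_assoc] at hH
  have := mul_left_cancel₀ hK₀ hH
  rw [this]
  rfl

lemma comb_main {n : ℕ} (hn : 0 < n) : ∀ (N d e : ℕ), d + e ≤ N → 1 ≤ d → 1 ≤ e →
    ∀ (u : Vnm n d) (y : Vnm n e), u ≠ 0 → y ≠ 0 →
    (∀ f : ℕ → Fin n, evv u 0 f * evv y d f = evv y 0 f * evv u e f) →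
    ∃ (g a b : ℕ) (x : Vnm n g) (α β : ℂ), a * g = d ∧ b * g = e ∧ x ≠ 0 ∧
      (∀ f, evv u 0 f = α * ∏ i ∈ Finset.range a, evv x (i * g) f) ∧
      (∀ f, evv y 0 f = β * ∏ i ∈ Finset.range b, evv x (i * g) f) := by
  intro N
  induction N with
  | zero => intro d e h hd he; omega
  | succ N ih =>
    intro d e hN hd he u y hu hy H
    rcases lt_trichotomy d e with hlt | heq | hgt
    · -- d < e
      obtain ⟨y'', C1⟩ := comb_step hd hlt u y hu H
      obtain ⟨K₀, hK₀⟩ := eucl_exists_ne_zero hu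
      have hy''0 : y'' ≠ 0 := by
        obtain ⟨Y, hY⟩ := eucl_exists_ne_zero hy
        intro h0
        set f : ℕ → Fin n := fun s => if h : s < e then Y ⟨s, h⟩ else ⟨0, hn⟩ with hf
        have e1 : evv y 0 f = y Y := evv_zero_eq y Y f (fun t => by
          simp only [hf]; rw [dif_pos t.isLt])
        have hC := C1 f
        rw [e1, h0] at hC
        simp only [evv, PiLp.zero_apply, zero_mul] at hC
        exact hY hC
      have H' : ∀ f, evv u 0 f * evv y'' d f = evv y'' 0 f * evv u (e - d) f := by
        intro f
        set f₁ : ℕ → Fin n := fun s => if h : s < e then f s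
          else K₀ ⟨(s - e) % d, Nat.mod_lt _ (by omega)⟩ with hf₁
        have e1 : evv y d f₁ = evv y'' d f₁ * evv u e f₁ := by
          have h := C1 (fun s => f₁ (d + s))
          rw [evv_shift, evv_shift, evv_shift] at h
          rw [evv_congr_o y (by omega : d + 0 = d), evv_congr_o y'' (by omega : d + 0 = d),
            evv_congr_o u (by omega : d + (e - d) = e)] at h
          exact h
        have e2 : evv u e f₁ = u K₀ := by
          apply congrArg u (funext fun t => ?_)
          simp only [hf₁]
          rw [dif_neg (by omega)]
          exact congrArg K₀ (Fin.ext (show (e + (t : ℕ) - e) % d = (t : ℕ) by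
            rw [show e + (t : ℕ) - e = (t : ℕ) by omega, Nat.mod_eq_of_lt t.isLt]))
        have hH := H f₁
        rw [e1, C1 f₁, e2] at hH
        have hc : evv u 0 f₁ * evv y'' d f₁ = evv y'' 0 f₁ * evv u (e - d) f₁ := by
          apply mul_right_cancel₀ hK₀
          rw [show evv u 0 f₁ * evv y'' d f₁ * u K₀
            = evv u 0 f₁ * (evv y'' d f₁ * u K₀) by ring, hH]
        have r1 : evv u 0 f₁ = evv u 0 f := congrArg u (funext fun t => by
          simp only [hf₁]; rw [dif_pos (by omega)])
        have r2 : evv y'' d f₁ = evv y'' d f := congrArg y'' (funext fun t => by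
          simp only [hf₁]; rw [dif_pos (by omega)])
        have r3 : evv y'' 0 f₁ = evv y'' 0 f := congrArg y'' (funext fun t => by
          simp only [hf₁]; rw [dif_pos (by omega)])
        have r4 : evv u (e - d) f₁ = evv u (e - d) f := congrArg u (funext fun t => by
          simp only [hf₁]; rw [dif_pos (by omega)])
        rw [r1, r2, r3, r4] at hc
        exact hc
      obtain ⟨g, a, b', x, α, β', hag, hb'g, hx0, hu_exp, hy''_exp⟩ :=
        ih d (e - d) (by omega) hd (by omega) u y'' hu hy''0 H'
      refine ⟨g, a, b' + a, x, α, β' * α, hag, by rw [add_mul]; omega, hx0, hu_exp, ?_⟩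
      intro f
      have s1 : evv u (e - d) f = α * ∏ i ∈ Finset.range a, evv x (e - d + i * g) f := by
        have h := hu_exp (fun s => f ((e - d) + s))
        rw [evv_shift, evv_congr_o u (by omega : e - d + 0 = e - d)] at h
        rw [h]
        congr 1
        exact Finset.prod_congr rfl fun i _ => evv_shift x (i * g) (e - d) f
      have s2 : ∏ i ∈ Finset.range a, evv x (e - d + i * g) f
          = ∏ i ∈ Finset.range a, evv x ((b' + i) * g) f :=
        Finset.prod_congr rfl fun i _ => evv_congr_o x (by rw [add_mul]; omega) f
      rw [C1 f, hy''_exp f, s1, s2, Finset.prod_range_add (fun i => evv x (i * g) f) b' a]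
      ring
    · -- d = e
      subst heq
      obtain ⟨Y₀, hY₀⟩ := eucl_exists_ne_zero hy
      have key : ∀ J : Fin d → Fin n, u J * y Y₀ = y J * u Y₀ := by
        intro J
        set f' : ℕ → Fin n := fun s => if h : s < d then J ⟨s, h⟩
          else Y₀ ⟨(s - d) % d, Nat.mod_lt _ (by omega)⟩ with hf'
        have h1 : evv u 0 f' = u J := by
          apply congrArg u (funext fun t => ?_)
          simp only [hf']
          rw [dif_pos (by omega : 0 + (t : ℕ) < d)]
          exact congrArg J (Fin.ext (show 0 + (t : ℕ) = (t : ℕ) by omega))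
        have h2 : evv y d f' = y Y₀ := by
          apply congrArg y (funext fun t => ?_)
          simp only [hf']
          rw [dif_neg (by omega)]
          exact congrArg Y₀ (Fin.ext (show (d + (t : ℕ) - d) % d = (t : ℕ) by
            rw [show d + (t : ℕ) - d = (t : ℕ) by omega, Nat.mod_eq_of_lt t.isLt]))
        have h3 : evv y 0 f' = y J := by
          apply congrArg y (funext fun t => ?_)
          simp only [hf']
          rw [dif_pos (by omega : 0 + (t : ℕ) < d)]
          exact congrArg J (Fin.ext (show 0 + (t : ℕ) = (t : ℕ) by omega))
        have h4 : evv u d f' = u Y₀ := by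
          apply congrArg u (funext fun t => ?_)
          simp only [hf']
          rw [dif_neg (by omega)]
          exact congrArg Y₀ (Fin.ext (show (d + (t : ℕ) - d) % d = (t : ℕ) by
            rw [show d + (t : ℕ) - d = (t : ℕ) by omega, Nat.mod_eq_of_lt t.isLt]))
        have h := H f'
        rw [h1, h2, h3, h4] at h
        exact h
      refine ⟨d, 1, 1, y, u Y₀ * (y Y₀)⁻¹, 1, one_mul d, one_mul d, hy, ?_, ?_⟩
      · intro f
        rw [Finset.prod_range_one,
          show evv y ((0 : ℕ) * d) f = evv y 0 f from evv_congr_o y (by omega) f]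
        have hk := key (fun t => f (0 + (t : ℕ)))
        have hu0 : evv u 0 f = u (fun t => f (0 + (t : ℕ))) := rfl
        have hy0 : evv y 0 f = y (fun t => f (0 + (t : ℕ))) := rfl
        rw [hu0, hy0]
        field_simp
        linear_combination hk
      · intro f
        rw [Finset.prod_range_one, one_mul,
          show evv y ((0 : ℕ) * d) f = evv y 0 f from evv_congr_o y (by omega) f]
    · -- e < d
      obtain ⟨u'', C1⟩ := comb_step he hgt y u hy (fun f => (H f).symm)
      obtain ⟨Y₀, hY₀⟩ := eucl_exists_ne_zero hy
      have hu''0 : u'' ≠ 0 := by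
        obtain ⟨U, hU⟩ := eucl_exists_ne_zero hu
        intro h0
        set f : ℕ → Fin n := fun s => if h : s < d then U ⟨s, h⟩ else ⟨0, hn⟩ with hf
        have e1 : evv u 0 f = u U := evv_zero_eq u U f (fun t => by
          simp only [hf]; rw [dif_pos t.isLt])
        have hC := C1 f
        rw [e1, h0] at hC
        simp only [evv, PiLp.zero_apply, zero_mul] at hC
        exact hU hC
      have H' : ∀ f, evv y 0 f * evv u'' e f = evv u'' 0 f * evv y (d - e) f := by
        intro f
        set f₁ : ℕ → Fin n := fun s => if h : s < d then f s
          else Y₀ ⟨(s - d) % e, Nat.mod_lt _ (by omega)⟩ with hf₁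
        have e1 : evv u e f₁ = evv u'' e f₁ * evv y d f₁ := by
          have h := C1 (fun s => f₁ (e + s))
          rw [evv_shift, evv_shift, evv_shift] at h
          rw [evv_congr_o u (by omega : e + 0 = e), evv_congr_o u'' (by omega : e + 0 = e),
            evv_congr_o y (by omega : e + (d - e) = d)] at h
          exact h
        have e2 : evv y d f₁ = y Y₀ := by
          apply congrArg y (funext fun t => ?_)
          simp only [hf₁]
          rw [dif_neg (by omega)]
          exact congrArg Y₀ (Fin.ext (show (d + (t : ℕ) - d) % e = (t : ℕ) by
            rw [show d + (t : ℕ) - d = (t : ℕ) by omega, Nat.mod_eq_of_lt t.isLt]))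
        have hH := H f₁
        rw [e1, C1 f₁, e2] at hH
        have hc : evv u'' 0 f₁ * evv y (d - e) f₁ = evv y 0 f₁ * evv u'' e f₁ := by
          apply mul_right_cancel₀ hY₀
          rw [mul_assoc (evv y 0 f₁)]
          exact hH
        have r1 : evv u'' 0 f₁ = evv u'' 0 f := congrArg u'' (funext fun t => by
          simp only [hf₁]; rw [dif_pos (by omega)])
        have r2 : evv y (d - e) f₁ = evv y (d - e) f := congrArg y (funext fun t => by
          simp only [hf₁]; rw [dif_pos (by omega)])
        have r3 : evv y 0 f₁ = evv y 0 f := congrArg y (funext fun t => by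
          simp only [hf₁]; rw [dif_pos (by omega)])
        have r4 : evv u'' e f₁ = evv u'' e f := congrArg u'' (funext fun t => by
          simp only [hf₁]; rw [dif_pos (by omega)])
        rw [r1, r2, r3, r4] at hc
        exact hc.symm
      obtain ⟨g, a', b, x, α', β, ha'g, hbg, hx0, hy_exp, hu''_exp⟩ :=
        ih e (d - e) (by omega) he (by omega) y u'' hy hu''0 H'
      refine ⟨g, b + a', a', x, β * α', α', by rw [add_mul]; omega, ha'g, hx0, ?_, hy_exp⟩
      intro f
      have s1 : evv y (d - e) f = α' * ∏ i ∈ Finset.range a', evv x (d - e + i * g) f := by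
        have h := hy_exp (fun s => f ((d - e) + s))
        rw [evv_shift, evv_congr_o y (by omega : d - e + 0 = d - e)] at h
        rw [h]
        congr 1
        exact Finset.prod_congr rfl fun i _ => evv_shift x (i * g) (d - e) f
      have s2 : ∏ i ∈ Finset.range a', evv x (d - e + i * g) f
          = ∏ i ∈ Finset.range a', evv x ((b + i) * g) f :=
        Finset.prod_congr rfl fun i _ => evv_congr_o x (by rw [add_mul]; omega) f
      rw [C1 f, hu''_exp f, s1, s2, Finset.prod_range_add (fun i => evv x (i * g) f) b a']
      ring

end Comb
/-! ### Splitting equivalence and Sword lemmas -/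

section Mix

/-- Splitting equivalence for tuples. -/
def mixE {X : Type*} (a b c : ℕ) (h : a + b = c) :
    ((Fin a → X) × (Fin b → X)) ≃ (Fin c → X) where
  toFun p i := if h' : (i : ℕ) < a then p.1 ⟨i, h'⟩ else p.2 ⟨(i : ℕ) - a, by omega⟩
  invFun W := (fun i => W ⟨(i : ℕ), by omega⟩, fun i => W ⟨a + (i : ℕ), by omega⟩)
  left_inv p := by
    refine Prod.ext ?_ ?_
    · funext i
      simp only
      rw [dif_pos i.isLt]
    · funext i
      simp only
      rw [dif_neg (by omega : ¬ (a + (i : ℕ) < a))]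
      exact congrArg p.2 (Fin.ext (show a + (i : ℕ) - a = (i : ℕ) by omega))
  right_inv W := by
    funext i
    simp only
    by_cases h' : (i : ℕ) < a
    · rw [dif_pos h']
    · rw [dif_neg h']
      exact congrArg W (Fin.ext (show a + ((i : ℕ) - a) = (i : ℕ) by omega))

lemma mixE_lt {X : Type*} {a b c : ℕ} (h : a + b = c) (P : Fin a → X) (Q : Fin b → X)
    {i : Fin c} (hi : (i : ℕ) < a) : mixE a b c h (P, Q) i = P ⟨i, hi⟩ := dif_pos hi

lemma mixE_ge {X : Type*} {a b c : ℕ} (h : a + b = c) (P : Fin a → X) (Q : Fin b → X)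
    {i : Fin c} (hi : ¬ (i : ℕ) < a) :
    mixE a b c h (P, Q) i = Q ⟨(i : ℕ) - a, by omega⟩ := dif_neg hi

lemma append_cast_eq_mixE {X : Type*} {a b c : ℕ} (h' : c = a + b) (h : a + b = c)
    (P : Fin a → X) (Q : Fin b → X) :
    (fun i : Fin c => Fin.append P Q (Fin.cast h' i)) = mixE a b c h (P, Q) := by
  funext i
  by_cases hi : (i : ℕ) < a
  · rw [mixE_lt h P Q hi,
      show Fin.cast h' i = Fin.castAdd b ⟨(i : ℕ), hi⟩ from Fin.ext rfl, Fin.append_left]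
  · rw [mixE_ge h P Q hi,
      show Fin.cast h' i = Fin.natAdd a ⟨(i : ℕ) - a, by omega⟩ from
        Fin.ext (show (i : ℕ) = a + ((i : ℕ) - a) by omega), Fin.append_right]

end Mix

section SwordLemmas

variable {H : Type*} [NormedAddCommGroup H] [InnerProductSpace ℂ H] [CompleteSpace H]
variable {ι : Type*}

lemma sword_succ (S : ι → H →L[ℂ] H) (k : ℕ) (J : Fin (k + 1) → ι) :
    Sword S (k + 1) J = (S (J 0)).comp (Sword S k (fun i => J i.succ)) := rfl

lemma sword_congr (S : ι → H →L[ℂ] H) (k : ℕ) {J K : Fin k → ι} (h : ∀ i, J i = K i) :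
    Sword S k J = Sword S k K := by rw [funext h]

lemma sword_cast (S : ι → H →L[ℂ] H) {k k' : ℕ} (h : k = k') (J : Fin k' → ι) :
    Sword S k' J = Sword S k (fun i => J (Fin.cast h i)) := by subst h; rfl

lemma sword_glue (S : ι → H →L[ℂ] H) : ∀ (k l c : ℕ) (h : k + l = c) (W : Fin c → ι),
    Sword S c W = (Sword S k (fun i => W ⟨(i : ℕ), by omega⟩)).comp
      (Sword S l (fun i => W ⟨k + (i : ℕ), by omega⟩)) := by
  intro k
  induction k with
  | zero =>
    intro l c h W
    subst h
    rw [sword_cast S (Nat.zero_add l).symm W]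
    show Sword S l _ = (ContinuousLinearMap.id ℂ H).comp _
    rw [ContinuousLinearMap.id_comp]
    exact sword_congr S l fun i => congrArg W (Fin.ext (show (i : ℕ) = 0 + (i : ℕ) by omega))
  | succ k ihk =>
    intro l c h W
    have h2 : (k + l) + 1 = c := by omega
    rw [sword_cast S h2 W, sword_succ, ihk l (k + l) rfl, sword_succ]
    rw [← ContinuousLinearMap.comp_assoc]
    refine congrArg₂ ContinuousLinearMap.comp (congrArg₂ ContinuousLinearMap.comp ?_ ?_) ?_
    · exact congrArg S (congrArg W (Fin.ext (show ((0 : Fin (k + l + 1)) : ℕ)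
        = ((0 : Fin (k + 1)) : ℕ) by simp)))
    · exact sword_congr S k fun i => congrArg W (Fin.ext
        (show (i : ℕ) + 1 = (i : ℕ) + 1 from rfl))
    · exact sword_congr S l fun i => congrArg W (Fin.ext
        (show k + (i : ℕ) + 1 = k + 1 + (i : ℕ) by omega))
  
lemma sword_mixE (S : ι → H →L[ℂ] H) (a b c : ℕ) (h : a + b = c)
    (P : Fin a → ι) (Q : Fin b → ι) :
    Sword S c (mixE a b c h (P, Q)) = (Sword S a P).comp (Sword S b Q) := by
  rw [sword_glue S a b c h]
  congr 1
  · exact sword_congr S a fun (i : Fin a) =>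
      (dif_pos i.isLt).trans (congrArg P (Fin.ext rfl))
  · exact sword_congr S b fun (i : Fin b) =>
      (dif_neg (show ¬ (a + (i : ℕ) < a) by omega)).trans
        (congrArg Q (Fin.ext (show a + (i : ℕ) - a = (i : ℕ) by omega)))

lemma sword_adj_sword {n : ℕ} (S : Fin n → H →L[ℂ] H)
    (hS1 : ∀ i j, (ContinuousLinearMap.adjoint (S i)).comp (S j)
      = if i = j then (1 : H →L[ℂ] H) else 0) :
    ∀ (k : ℕ) (J K : Fin k → Fin n),
      (ContinuousLinearMap.adjoint (Sword S k J)).comp (Sword S k K)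
        = if J = K then (1 : H →L[ℂ] H) else 0 := by
  intro k
  induction k with
  | zero =>
    intro J K
    rw [if_pos (Subsingleton.elim J K)]
    show (ContinuousLinearMap.adjoint (1 : H →L[ℂ] H)).comp 1 = 1
    simp [ContinuousLinearMap.one_def, ContinuousLinearMap.adjoint_id]
  | succ k ihk =>
    intro J K
    rw [sword_succ, sword_succ, ContinuousLinearMap.adjoint_comp,
      ContinuousLinearMap.comp_assoc, ← ContinuousLinearMap.comp_assoc
        (ContinuousLinearMap.adjoint (S (J 0))) (S (K 0)) (Sword S k fun i => K i.succ),
      hS1 (J 0) (K 0)]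
    by_cases h0 : J 0 = K 0
    · rw [if_pos h0]
      have h1comp : ((1 : H →L[ℂ] H)).comp (Sword S k fun i => K i.succ)
          = Sword S k fun i => K i.succ := by
        rw [ContinuousLinearMap.one_def, ContinuousLinearMap.id_comp]
      rw [h1comp, ihk]
      by_cases ht : (fun i : Fin k => J i.succ) = (fun i : Fin k => K i.succ)
      · have hJK : J = K := by
          funext i
          refine Fin.cases h0 (fun j => ?_) i
          exact congrFun ht j
        rw [if_pos ht, if_pos hJK]
      · have hJK : J ≠ K := fun hh => ht (by rw [hh])
        rw [if_neg ht, if_neg hJK]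
    · rw [if_neg h0]
      have hJK : J ≠ K := fun hh => h0 (by rw [hh])
      rw [if_neg hJK]
      simp

lemma sword_adj_apply {n : ℕ} (S : Fin n → H →L[ℂ] H)
    (hS1 : ∀ i j, (ContinuousLinearMap.adjoint (S i)).comp (S j)
      = if i = j then (1 : H →L[ℂ] H) else 0)
    (k : ℕ) (J K : Fin k → Fin n) (v : H) :
    (ContinuousLinearMap.adjoint (Sword S k J)) (Sword S k K v)
      = if J = K then v else 0 := by
  rw [← ContinuousLinearMap.comp_apply, sword_adj_sword S hS1 k J K]
  split_ifs <;> simp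

lemma sword_inner {n : ℕ} (S : Fin n → H →L[ℂ] H)
    (hS1 : ∀ i j, (ContinuousLinearMap.adjoint (S i)).comp (S j)
      = if i = j then (1 : H →L[ℂ] H) else 0)
    (k : ℕ) (J K : Fin k → Fin n) (v v' : H) :
    (inner ℂ (Sword S k J v) (Sword S k K v') : ℂ)
      = if J = K then (inner ℂ v v' : ℂ) else 0 := by
  rw [← ContinuousLinearMap.adjoint_inner_right, sword_adj_apply S hS1 k J K]
  split_ifs
  · rfl
  · exact inner_zero_right _

end SwordLemmas
/-! ### Lemmas about the fixed vector of `s(z)` -/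

section Dlemmas

open Finset

variable {H : Type*} [NormedAddCommGroup H] [InnerProductSpace ℂ H] [CompleteSpace H]
variable {n m : ℕ} {S : Fin n → H →L[ℂ] H} {z : Vnm n m} {Ω : H}

lemma sop_apply : sop S z Ω = ∑ W : Fin m → Fin n, z W • Sword S m W Ω := by
  simp [sop, ContinuousLinearMap.sum_apply, ContinuousLinearMap.smul_apply]

lemma adj_sword_m
    (hS1 : ∀ i j, (ContinuousLinearMap.adjoint (S i)).comp (S j)
      = if i = j then (1 : H →L[ℂ] H) else 0)
    (hfix : sop S z Ω = Ω) (J : Fin m → Fin n) :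
    ContinuousLinearMap.adjoint (Sword S m J) Ω = z J • Ω := by
  conv_lhs => rw [← hfix]
  rw [sop_apply, map_sum]
  rw [Finset.sum_congr rfl (fun W _ => by
    rw [map_smul, sword_adj_apply S hS1 m J W])]
  have h1 : ∀ W : Fin m → Fin n, z W • (if J = W then Ω else 0)
      = if J = W then z W • Ω else 0 := fun W => by split_ifs <;> simp
  rw [Finset.sum_congr rfl fun W _ => h1 W, Finset.sum_ite_eq]
  simp

lemma tpow_zero (W : Fin (0 * m) → Fin n) : tpowV z 0 W = 1 := by
  simp [tpowV]

lemma tpow_succ_mix {a : ℕ} (h : m + a * m = (a + 1) * m)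
    (J : Fin m → Fin n) (W : Fin (a * m) → Fin n) :
    tpowV z (a + 1) (mixE m (a * m) ((a + 1) * m) h (J, W)) = z J * tpowV z a W := by
  simp only [tpowV]
  rw [Fin.prod_univ_succ]
  congr 1
  · apply congrArg z (funext fun t => ?_)
    rw [mixE_lt h J W (show (((0 : Fin (a + 1)) : ℕ) * m + (t : ℕ)) < m by simp)]
    exact congrArg J (Fin.ext (show ((0 : Fin (a + 1)) : ℕ) * m + (t : ℕ) = (t : ℕ) by simp))
  · apply Finset.prod_congr rfl fun i _ => ?_
    apply congrArg z (funext fun t => ?_)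
    rw [mixE_ge h J W (show ¬ ((((i.succ : Fin (a + 1)) : ℕ) * m + (t : ℕ)) < m) by
      simp only [Fin.val_succ]
      have h3 : ((i : ℕ) + 1) * m = (i : ℕ) * m + m := by ring
      omega)]
    exact congrArg W (Fin.ext (show ((i.succ : Fin (a + 1)) : ℕ) * m + (t : ℕ) - m
        = (i : ℕ) * m + (t : ℕ) by
      simp only [Fin.val_succ]
      have h3 : ((i : ℕ) + 1) * m = (i : ℕ) * m + m := by ring
      omega))

lemma omega_expand
    (hS1 : ∀ i j, (ContinuousLinearMap.adjoint (S i)).comp (S j)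
      = if i = j then (1 : H →L[ℂ] H) else 0)
    (hfix : sop S z Ω = Ω) (a : ℕ) :
    Ω = ∑ W : Fin (a * m) → Fin n, tpowV z a W • Sword S (a * m) W Ω := by
  induction a with
  | zero =>
    have hcard : ∀ W W' : Fin (0 * m) → Fin n, W = W' := fun W W' =>
      funext fun i => absurd i.isLt (by omega)
    set W₀ : Fin (0 * m) → Fin n := fun i => absurd i.isLt (by omega) with hW₀
    rw [Finset.sum_eq_single_of_mem W₀ (Finset.mem_univ _)
      (fun W _ hW => absurd (hcard W W₀) hW)]
    rw [tpow_zero, sword_cast S (show 0 = 0 * m by omega) W₀]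
    show Ω = (1 : ℂ) • (1 : H →L[ℂ] H) Ω
    simp
  | succ a iha =>
    have h : m + a * m = (a + 1) * m := by ring
    have key : ∀ (p : (Fin m → Fin n) × (Fin (a * m) → Fin n)),
        tpowV z (a + 1) (mixE m (a * m) ((a + 1) * m) h p)
            • Sword S ((a + 1) * m) (mixE m (a * m) ((a + 1) * m) h p) Ω
          = z p.1 • (tpowV z a p.2 • Sword S m p.1 (Sword S (a * m) p.2 Ω)) := by
      rintro ⟨J, W⟩
      rw [tpow_succ_mix h J W, sword_mixE S m (a * m) ((a + 1) * m) h J W,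
        ContinuousLinearMap.comp_apply, smul_smul]
    calc Ω = sop S z Ω := hfix.symm
      _ = ∑ J : Fin m → Fin n, z J • Sword S m J Ω := sop_apply
      _ = ∑ J : Fin m → Fin n, z J • Sword S m J
            (∑ W : Fin (a * m) → Fin n, tpowV z a W • Sword S (a * m) W Ω) := by
          rw [← iha]
      _ = ∑ J : Fin m → Fin n, ∑ W : Fin (a * m) → Fin n,
            z J • (tpowV z a W • Sword S m J (Sword S (a * m) W Ω)) := by
          refine Finset.sum_congr rfl fun J _ => ?_
          rw [map_sum, Finset.smul_sum]
          exact Finset.sum_congr rfl fun W _ => by rw [map_smul]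
      _ = ∑ p : (Fin m → Fin n) × (Fin (a * m) → Fin n),
            tpowV z (a + 1) (mixE m (a * m) ((a + 1) * m) h p)
              • Sword S ((a + 1) * m) (mixE m (a * m) ((a + 1) * m) h p) Ω := by
          rw [Fintype.sum_prod_type]
          exact Finset.sum_congr rfl fun J _ =>
            Finset.sum_congr rfl fun W _ => (key (J, W)).symm
      _ = ∑ V : Fin ((a + 1) * m) → Fin n, tpowV z (a + 1) V • Sword S ((a + 1) * m) V Ω :=
          Fintype.sum_equiv (mixE m (a * m) ((a + 1) * m) h) _ _ (fun p => rfl)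

lemma adj_sword_mul
    (hS1 : ∀ i j, (ContinuousLinearMap.adjoint (S i)).comp (S j)
      = if i = j then (1 : H →L[ℂ] H) else 0)
    (hfix : sop S z Ω = Ω) (a : ℕ) (J : Fin (a * m) → Fin n) :
    ContinuousLinearMap.adjoint (Sword S (a * m) J) Ω = tpowV z a J • Ω := by
  conv_lhs => rw [omega_expand hS1 hfix a]
  rw [map_sum]
  rw [Finset.sum_congr rfl (fun W _ => by
    rw [map_smul, sword_adj_apply S hS1 _ J W])]
  have h1 : ∀ W : Fin (a * m) → Fin n, tpowV z a W • (if J = W then Ω else 0)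
      = if J = W then tpowV z a W • Ω else 0 := fun W => by split_ifs <;> simp
  rw [Finset.sum_congr rfl fun W _ => h1 W, Finset.sum_ite_eq]
  simp

lemma adj_sword_general
    (hS1 : ∀ i j, (ContinuousLinearMap.adjoint (S i)).comp (S j)
      = if i = j then (1 : H →L[ℂ] H) else 0)
    (hfix : sop S z Ω = Ω) (k a : ℕ) (hka : k ≤ a * m)
    (hh : k + (a * m - k) = a * m) (J : Fin k → Fin n) :
    ContinuousLinearMap.adjoint (Sword S k J) Ω
      = ∑ L : Fin (a * m - k) → Fin n,
          tpowV z a (mixE k (a * m - k) (a * m) hh (J, L)) • Sword S (a * m - k) L Ω := by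
  conv_lhs => rw [omega_expand hS1 hfix a]
  rw [map_sum]
  calc ∑ W : Fin (a * m) → Fin n,
        (ContinuousLinearMap.adjoint (Sword S k J)) (tpowV z a W • Sword S (a * m) W Ω)
      = ∑ W : Fin (a * m) → Fin n,
          tpowV z a W • (ContinuousLinearMap.adjoint (Sword S k J)) (Sword S (a * m) W Ω) :=
        Finset.sum_congr rfl fun W _ => by rw [map_smul]
    _ = ∑ p : (Fin k → Fin n) × (Fin (a * m - k) → Fin n),
          tpowV z a (mixE k (a * m - k) (a * m) hh p) •
            (ContinuousLinearMap.adjoint (Sword S k J))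
              (Sword S (a * m) (mixE k (a * m - k) (a * m) hh p) Ω) :=
        (Fintype.sum_equiv (mixE k (a * m - k) (a * m) hh) _ _ (fun p => rfl)).symm
    _ = ∑ J' : Fin k → Fin n, ∑ L : Fin (a * m - k) → Fin n,
          tpowV z a (mixE k (a * m - k) (a * m) hh (J', L)) •
            (if J = J' then Sword S (a * m - k) L Ω else 0) := by
        rw [Fintype.sum_prod_type]
        refine Finset.sum_congr rfl fun J' _ => Finset.sum_congr rfl fun L _ => ?_
        rw [sword_mixE S k (a * m - k) (a * m) hh J' L, ContinuousLinearMap.comp_apply,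
          sword_adj_apply S hS1 k J J']
    _ = ∑ L : Fin (a * m - k) → Fin n,
          tpowV z a (mixE k (a * m - k) (a * m) hh (J, L)) • Sword S (a * m - k) L Ω := by
        rw [Finset.sum_eq_single_of_mem J (Finset.mem_univ J)
          (fun J' _ hne => by
            rw [Finset.sum_eq_zero]
            intro L _
            rw [if_neg (fun hh' => hne hh'.symm), smul_zero])]
        exact Finset.sum_congr rfl fun L _ => by rw [if_pos rfl]

lemma adj_sword_partial
    (hS1 : ∀ i j, (ContinuousLinearMap.adjoint (S i)).comp (S j)
      = if i = j then (1 : H →L[ℂ] H) else 0)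
    (hfix : sop S z Ω = Ω) (j : ℕ) (hj : j ≤ m)
    (hh : j + (m - j) = m) (A : Fin j → Fin n) :
    ContinuousLinearMap.adjoint (Sword S j A) Ω
      = ∑ L : Fin (m - j) → Fin n,
          z (mixE j (m - j) m hh (A, L)) • Sword S (m - j) L Ω := by
  conv_lhs => rw [← hfix]
  rw [sop_apply, map_sum]
  calc ∑ W : Fin m → Fin n,
        (ContinuousLinearMap.adjoint (Sword S j A)) (z W • Sword S m W Ω)
      = ∑ W : Fin m → Fin n,
          z W • (ContinuousLinearMap.adjoint (Sword S j A)) (Sword S m W Ω) :=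
        Finset.sum_congr rfl fun W _ => by rw [map_smul]
    _ = ∑ p : (Fin j → Fin n) × (Fin (m - j) → Fin n),
          z (mixE j (m - j) m hh p) •
            (ContinuousLinearMap.adjoint (Sword S j A))
              (Sword S m (mixE j (m - j) m hh p) Ω) :=
        (Fintype.sum_equiv (mixE j (m - j) m hh) _ _ (fun p => rfl)).symm
    _ = ∑ A' : Fin j → Fin n, ∑ L : Fin (m - j) → Fin n,
          z (mixE j (m - j) m hh (A', L)) •
            (if A = A' then Sword S (m - j) L Ω else 0) := by
        rw [Fintype.sum_prod_type]
        refine Finset.sum_congr rfl fun A' _ => Finset.sum_congr rfl fun L _ => ?_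
        rw [sword_mixE S j (m - j) m hh A' L, ContinuousLinearMap.comp_apply,
          sword_adj_apply S hS1 j A A']
    _ = ∑ L : Fin (m - j) → Fin n,
          z (mixE j (m - j) m hh (A, L)) • Sword S (m - j) L Ω := by
        rw [Finset.sum_eq_single_of_mem A (Finset.mem_univ A)
          (fun A' _ hne => by
            rw [Finset.sum_eq_zero]
            intro L _
            rw [if_neg (fun hh' => hne hh'.symm), smul_zero])]
        exact Finset.sum_congr rfl fun L _ => by rw [if_pos rfl]

end Dlemmas
/-! ### Norm multiplicativity of tensor powers -/

section NormPow

open Finset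

lemma castV_rfl {n m : ℕ} (v : Vnm n m) : castV rfl v = v := rfl

lemma castV_norm {n m m' : ℕ} (h : m = m') (v : Vnm n m) : ‖castV h v‖ = ‖v‖ := by
  subst h
  rfl

/-- Block equivalence `(Fin (p·g) → X) ≃ (Fin p → Fin g → X)`. -/
def blocksE (X : Type*) (p g : ℕ) (hg : 1 ≤ g) :
    (Fin p → Fin g → X) ≃ (Fin (p * g) → X) where
  toFun F s := F ⟨(s : ℕ) / g, by
      have := s.isLt
      exact (Nat.div_lt_iff_lt_mul (by omega)).mpr (by omega)⟩
    ⟨(s : ℕ) % g, Nat.mod_lt _ (by omega)⟩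
  invFun V i t := V ⟨(i : ℕ) * g + (t : ℕ), by
      have h2 : (t : ℕ) < g := t.isLt
      have h1 : (i : ℕ) + 1 ≤ p := i.isLt
      have h4 : ((i : ℕ) + 1) * g ≤ p * g := Nat.mul_le_mul_right g h1
      have h3 : ((i : ℕ) + 1) * g = (i : ℕ) * g + g := by ring
      omega⟩
  left_inv F := by
    funext i t
    have hq : ((i : ℕ) * g + (t : ℕ)) / g = (i : ℕ) := by
      rw [Nat.mul_comm (i : ℕ) g, Nat.mul_add_div (by omega), Nat.div_eq_of_lt t.isLt]
      omega
    have hr : ((i : ℕ) * g + (t : ℕ)) % g = (t : ℕ) := by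
      rw [Nat.mul_add_mod', Nat.mod_eq_of_lt t.isLt]
    exact (congrFun (congrArg F (Fin.ext hq)) _).trans (congrArg (F i) (Fin.ext hr))
  right_inv V := by
    funext s
    refine congrArg V (Fin.ext ?_)
    show (s : ℕ) / g * g + (s : ℕ) % g = (s : ℕ)
    rw [Nat.mul_comm ((s : ℕ) / g) g]
    exact Nat.div_add_mod (s : ℕ) g

lemma tpow_norm {n g p : ℕ} (hg : 1 ≤ g) (x : Vnm n g) :
    ‖tpowV x p‖ ^ 2 = (‖x‖ ^ 2) ^ p := by
  rw [eucl_norm_sq, eucl_norm_sq]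
  have hterm : ∀ V : Fin (p * g) → Fin n, ‖tpowV x p V‖ ^ 2
      = ∏ i : Fin p, ‖x (fun t => V ⟨(i : ℕ) * g + (t : ℕ), by
          have h2 : (t : ℕ) < g := t.isLt
          have h1 : (i : ℕ) + 1 ≤ p := i.isLt
          have h3 : ((i : ℕ) + 1) * g = (i : ℕ) * g + g := by ring
          have h4 : ((i : ℕ) + 1) * g ≤ p * g := Nat.mul_le_mul_right g h1
          omega⟩)‖ ^ 2 := by
    intro V
    simp only [tpowV]
    rw [norm_prod]
    exact (Finset.prod_pow _ _ _).symm
  rw [Finset.sum_congr rfl fun V _ => hterm V]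
  have hre : ∑ V : Fin (p * g) → Fin n, ∏ i : Fin p, ‖x (fun t => V ⟨(i : ℕ) * g + (t : ℕ), by
          have h2 : (t : ℕ) < g := t.isLt
          have h1 : (i : ℕ) + 1 ≤ p := i.isLt
          have h3 : ((i : ℕ) + 1) * g = (i : ℕ) * g + g := by ring
          have h4 : ((i : ℕ) + 1) * g ≤ p * g := Nat.mul_le_mul_right g h1
          omega⟩)‖ ^ 2
      = ∑ F : Fin p → Fin g → Fin n, ∏ i : Fin p, ‖x (F i)‖ ^ 2 := by
    refine (Fintype.sum_equiv (blocksE (Fin n) p g hg) _ _ fun F => ?_).symm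
    refine Finset.prod_congr rfl fun i _ => ?_
    have harg : (fun t : Fin g => blocksE (Fin n) p g hg F ⟨(i : ℕ) * g + (t : ℕ), by
          have h2 : (t : ℕ) < g := t.isLt
          have h1 : (i : ℕ) + 1 ≤ p := i.isLt
          have h3 : ((i : ℕ) + 1) * g = (i : ℕ) * g + g := by ring
          have h4 : ((i : ℕ) + 1) * g ≤ p * g := Nat.mul_le_mul_right g h1
          omega⟩) = F i := by
      funext t
      show F ⟨((i : ℕ) * g + (t : ℕ)) / g, _⟩ ⟨((i : ℕ) * g + (t : ℕ)) % g, _⟩ = F i t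
      have hq : ((i : ℕ) * g + (t : ℕ)) / g = (i : ℕ) := by
        rw [Nat.mul_comm (i : ℕ) g, Nat.mul_add_div (by omega), Nat.div_eq_of_lt t.isLt]
        omega
      have hr : ((i : ℕ) * g + (t : ℕ)) % g = (t : ℕ) := by
        rw [Nat.mul_add_mod', Nat.mod_eq_of_lt t.isLt]
      exact (congrFun (congrArg F (Fin.ext hq)) _).trans (congrArg (F i) (Fin.ext hr))
    rw [harg]
  rw [hre]
  calc ∑ F : Fin p → Fin g → Fin n, ∏ i : Fin p, ‖x (F i)‖ ^ 2
      = ∑ F ∈ Fintype.piFinset (fun _ : Fin p => (Finset.univ : Finset (Fin g → Fin n))),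
          ∏ i : Fin p, ‖x (F i)‖ ^ 2 := by rw [Fintype.piFinset_univ]
    _ = ∏ _i : Fin p, ∑ J : Fin g → Fin n, ‖x J‖ ^ 2 :=
        (Finset.prod_univ_sum (fun _ : Fin p => (Finset.univ : Finset (Fin g → Fin n)))
          (fun _ J => ‖x J‖ ^ 2)).symm
    _ = (∑ J : Fin g → Fin n, ‖x J‖ ^ 2) ^ p := by
        rw [Finset.prod_const, Finset.card_univ, Fintype.card_fin]

lemma tpow_norm' {n g p : ℕ} (hg : 1 ≤ g) (x : Vnm n g) : ‖tpowV x p‖ = ‖x‖ ^ p := by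
  have h := tpow_norm (p := p) hg x
  have h2 : ‖tpowV x p‖ ^ 2 = (‖x‖ ^ p) ^ 2 := by rw [h]; ring
  have := norm_nonneg (tpowV x p)
  have := norm_nonneg x
  nlinarith [pow_nonneg (norm_nonneg x) p, sq_nonneg (‖tpowV x p‖ - ‖x‖ ^ p)]

end NormPow
/-! ### The core vanishing lemma -/

section Core

open Finset

lemma pow_eq_one_nonneg {a : ℝ} (h0 : 0 ≤ a) {k : ℕ} (hk : k ≠ 0) (h : a ^ k = 1) :
    a = 1 := by
  rcases lt_trichotomy a 1 with h1 | h1 | h1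
  · have h2 : a ^ k < 1 ^ k := by
      apply pow_lt_pow_left₀ h1 h0 hk
    rw [one_pow] at h2
    linarith
  · exact h1
  · have h2 : (1 : ℝ) ^ k < a ^ k := by
      apply pow_lt_pow_left₀ h1 (by norm_num) hk
    rw [one_pow] at h2
    linarith

variable {H : Type*} [NormedAddCommGroup H] [InnerProductSpace ℂ H] [CompleteSpace H]

lemma core_zero {n m : ℕ} (hn0 : 0 < n) (hm : 1 ≤ m)
    {S : Fin n → H →L[ℂ] H}
    (hS1 : ∀ i j, (ContinuousLinearMap.adjoint (S i)).comp (S j)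
      = if i = j then (1 : H →L[ℂ] H) else 0)
    {z : Vnm n m} (hz : ‖z‖ = 1) (hznp : ¬ PeriodicV z)
    {Ω : H} (hfix : sop S z Ω = Ω)
    (d : ℕ) (hd1 : 1 ≤ d) (hdm : d < m) (M₀ : Fin d → Fin n) :
    (inner ℂ Ω (Sword S d M₀ Ω) : ℂ) = 0 := by
  set e : ℕ := m - d with he
  have hde : d + e = m := by omega
  have hed : e + d = m := by omega
  have he1 : 1 ≤ e := by omega
  have left_exp : ∀ (W : Fin m → Fin n) (xx : H),
      (inner ℂ Ω (Sword S m W xx) : ℂ) = starRingEnd ℂ (z W) * (inner ℂ Ω xx : ℂ) := by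
    intro W xx
    rw [← ContinuousLinearMap.adjoint_inner_left, adj_sword_m hS1 hfix W, inner_smul_left]
  set w : EuclideanSpace ℂ (Fin d → Fin n) :=
    WithLp.toLp 2 (fun M => (inner ℂ Ω (Sword S d M Ω) : ℂ)) with hw
  suffices hw0 : w = 0 by
    simpa only [hw, PiLp.zero_apply] using congrArg (fun v => v M₀) hw0
  by_contra hwne
  have key : ∀ M : Fin d → Fin n, w M
      = ∑ J' : Fin e → Fin n, starRingEnd ℂ (z (mixE d e m hde (M, J')))
          * ∑ J'' : Fin d → Fin n, z (mixE e d m hed (J', J'')) * w J'' := by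
    intro M
    have step1 : w M
        = ∑ J : Fin m → Fin n, z J * (inner ℂ Ω (Sword S d M (Sword S m J Ω)) : ℂ) := by
      have h0 : w M = (inner ℂ Ω (Sword S d M (sop S z Ω)) : ℂ) := by
        simp only [hw]
        rw [hfix]
      rw [h0, sop_apply, map_sum, inner_sum]
      exact Finset.sum_congr rfl fun J _ => by rw [map_smul, inner_smul_right]
    rw [step1]
    have step2 : ∑ J : Fin m → Fin n, z J * (inner ℂ Ω (Sword S d M (Sword S m J Ω)) : ℂ)
        = ∑ p : (Fin e → Fin n) × (Fin d → Fin n), z (mixE e d m hed p) *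
            (starRingEnd ℂ (z (mixE d e m hde (M, p.1))) * w p.2) := by
      refine (Fintype.sum_equiv (mixE e d m hed) _ _ fun p => ?_).symm
      obtain ⟨J', J''⟩ := p
      congr 1
      have harg : Sword S d M (Sword S m (mixE e d m hed (J', J'')) Ω)
          = Sword S m (mixE d e m hde (M, J')) (Sword S d J'' Ω) := by
        rw [sword_mixE S e d m hed J' J'', sword_mixE S d e m hde M J']
        rfl
      rw [harg, left_exp]
    rw [step2, Fintype.sum_prod_type]
    refine Finset.sum_congr rfl fun J' _ => ?_
    rw [Finset.mul_sum]
    exact Finset.sum_congr rfl fun J'' _ => by ring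
  set A : EuclideanSpace ℂ ((Fin e → Fin n) × (Fin d → Fin n)) :=
    WithLp.toLp 2 (fun p => z (mixE e d m hed p)) with hA
  set A' : EuclideanSpace ℂ ((Fin d → Fin n) × (Fin e → Fin n)) :=
    WithLp.toLp 2 (fun p => starRingEnd ℂ (z (mixE d e m hde p))) with hA'
  have hrel : w = opOf A' (opOf A w) := by
    refine PiLp.ext fun M => ?_
    rw [key M]
    simp only [opOf, hA, hA']
  have hAnorm : ‖A‖ = 1 := by
    apply sq_eq_one_of_nonneg (norm_nonneg A)
    rw [eucl_norm_sq]
    have h1 : ∑ p : (Fin e → Fin n) × (Fin d → Fin n), ‖A p‖ ^ 2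
        = ∑ W : Fin m → Fin n, ‖z W‖ ^ 2 :=
      Fintype.sum_equiv (mixE e d m hed) _ _ fun p => by rw [hA]
    rw [h1, ← eucl_norm_sq, hz]
    norm_num
  have hA'norm : ‖A'‖ = 1 := by
    apply sq_eq_one_of_nonneg (norm_nonneg A')
    rw [eucl_norm_sq]
    have h1 : ∑ p : (Fin d → Fin n) × (Fin e → Fin n), ‖A' p‖ ^ 2
        = ∑ W : Fin m → Fin n, ‖z W‖ ^ 2 :=
      Fintype.sum_equiv (mixE d e m hde) _ _ fun p => by
        rw [hA']
        simp [RCLike.norm_conj]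
    rw [h1, ← eucl_norm_sq, hz]
    norm_num
  have hle1 : ‖opOf A w‖ ≤ ‖w‖ := by
    have h1 := opOf_norm_le A w
    rw [hAnorm, one_mul] at h1
    exact h1
  have hge : ‖w‖ ≤ ‖opOf A w‖ := by
    conv_lhs => rw [hrel]
    have h1 := opOf_norm_le A' (opOf A w)
    rw [hA'norm, one_mul] at h1
    exact h1
  have heqn : ‖opOf A w‖ = ‖w‖ := le_antisymm hle1 hge
  have htne : ‖w‖ ≠ 0 := fun h => hwne (norm_eq_zero.mp h)
  set c : ℂ := (‖w‖ : ℂ) with hc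
  have hc0 : c ≠ 0 := by
    simp only [hc, ne_eq, Complex.ofReal_eq_zero]
    exact htne
  have hcnorm : ‖c‖ = ‖w‖ := by
    rw [hc]
    simp [abs_of_nonneg (norm_nonneg w)]
  set x : EuclideanSpace ℂ (Fin d → Fin n) := c⁻¹ • w with hx
  have hxnorm : ‖x‖ = 1 := by
    rw [hx, norm_smul, norm_inv, hcnorm]
    exact inv_mul_cancel₀ htne
  set y : EuclideanSpace ℂ (Fin e → Fin n) := opOf A x with hy
  have hAwy : opOf A w = c • y := by
    rw [hy, hx, opOf_smul, smul_smul, mul_inv_cancel₀ hc0, one_smul]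
  have hynorm : ‖y‖ = 1 := by
    have h1 : ‖opOf A w‖ = ‖c‖ * ‖y‖ := by rw [hAwy, norm_smul]
    rw [heqn, hcnorm] at h1
    have h2 : ‖w‖ * 1 = ‖w‖ * ‖y‖ := by rw [mul_one, ← h1]
    exact (mul_left_cancel₀ htne h2).symm
  have hAx1 : ‖opOf A x‖ = 1 := by rw [← hy]; exact hynorm
  have hAfact := opOf_rank_one A x (le_of_eq hAnorm) hxnorm hAx1
  have hxeq : opOf A' y = x := by
    have h1 : w = opOf A' (c • y) := by rw [← hAwy]; exact hrel
    rw [opOf_smul] at h1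
    rw [hx, h1, inv_smul_smul₀ hc0]
  have hA'y1 : ‖opOf A' y‖ = 1 := by rw [hxeq, hxnorm]
  have hA'fact := opOf_rank_one A' y (le_of_eq hA'norm) hynorm hA'y1
  set u : Vnm n d := WithLp.toLp 2 (fun M => starRingEnd ℂ (x M)) with hu
  have hz1 : ∀ (J' : Fin e → Fin n) (J'' : Fin d → Fin n),
      z (mixE e d m hed (J', J'')) = y J' * u J'' := by
    intro J' J''
    have h := hAfact J' J''
    rw [← hy] at h
    simp only [hA] at h
    rw [h]
  have hz2 : ∀ (M : Fin d → Fin n) (J' : Fin e → Fin n),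
      z (mixE d e m hde (M, J')) = u M * y J' := by
    intro M J'
    have h := hA'fact M J'
    rw [hxeq] at h
    simp only [hA'] at h
    have h2 := congrArg (starRingEnd ℂ) h
    simp only [Complex.conj_conj, map_mul] at h2
    rw [h2]
  have hxne : x ≠ 0 := fun h0 => by
    rw [h0, norm_zero] at hxnorm
    exact absurd hxnorm (by norm_num)
  have hyne : y ≠ 0 := fun h0 => by
    rw [h0, norm_zero] at hynorm
    exact absurd hynorm (by norm_num)
  have hune : u ≠ 0 := by
    intro h0
    apply hxne
    refine PiLp.ext fun M => ?_
    have hM := congrArg (fun v => v M) h0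
    simp only [hu, PiLp.zero_apply] at hM
    have := congrArg (starRingEnd ℂ) hM
    simp only [Complex.conj_conj, map_zero] at this
    simpa [PiLp.zero_apply] using this
  have hsplit1 : ∀ f : ℕ → Fin n,
      z (fun t : Fin m => f (t : ℕ)) = evv u 0 f * evv y d f := by
    intro f
    have harg : (fun t : Fin m => f (t : ℕ)) = mixE d e m hde
        (fun t : Fin d => f (0 + (t : ℕ)), fun t : Fin e => f (d + (t : ℕ))) := by
      funext t
      by_cases h' : (t : ℕ) < d
      · rw [mixE_lt hde _ _ h']
        exact congrArg f (show (t : ℕ) = 0 + (t : ℕ) by omega)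
      · rw [mixE_ge hde _ _ h']
        exact congrArg f (show (t : ℕ) = d + ((t : ℕ) - d) by omega)
    rw [harg, hz2]
    rfl
  have hsplit2 : ∀ f : ℕ → Fin n,
      z (fun t : Fin m => f (t : ℕ)) = evv y 0 f * evv u e f := by
    intro f
    have harg : (fun t : Fin m => f (t : ℕ)) = mixE e d m hed
        (fun t : Fin e => f (0 + (t : ℕ)), fun t : Fin d => f (e + (t : ℕ))) := by
      funext t
      by_cases h' : (t : ℕ) < e
      · rw [mixE_lt hed _ _ h']
        exact congrArg f (show (t : ℕ) = 0 + (t : ℕ) by omega)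
      · rw [mixE_ge hed _ _ h']
        exact congrArg f (show (t : ℕ) = e + ((t : ℕ) - e) by omega)
    rw [harg, hz1]
    rfl
  have hcomb : ∀ f : ℕ → Fin n, evv u 0 f * evv y d f = evv y 0 f * evv u e f :=
    fun f => (hsplit1 f).symm.trans (hsplit2 f)
  obtain ⟨g, a, b, x', α, β, hag, hbg, hx'0, hu_exp, hy_exp⟩ :=
    comb_main hn0 (d + e) d e le_rfl hd1 he1 u y hune hyne hcomb
  have hg1 : 1 ≤ g := by
    rcases Nat.eq_zero_or_pos g with h | h
    · rw [h, Nat.mul_zero] at hag; omega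
    · omega
  have ha1 : 1 ≤ a := by
    rcases Nat.eq_zero_or_pos a with h | h
    · rw [h, Nat.zero_mul] at hag; omega
    · omega
  have hb1 : 1 ≤ b := by
    rcases Nat.eq_zero_or_pos b with h | h
    · rw [h, Nat.zero_mul] at hbg; omega
    · omega
  have hpg : (a + b) * g = m := by rw [add_mul]; omega
  obtain ⟨ρ, hρ⟩ := IsAlgClosed.exists_pow_nat_eq (α * β) (show 0 < a + b by omega)
  set x'' : Vnm n g := ρ • x' with hx''
  have hz_exp : ∀ f : ℕ → Fin n, z (fun t : Fin m => f (t : ℕ))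
      = (α * β) * ∏ i ∈ Finset.range (a + b), evv x' (i * g) f := by
    intro f
    rw [hsplit1 f, hu_exp f]
    have hyd : evv y d f = β * ∏ i ∈ Finset.range b, evv x' (d + i * g) f := by
      have h := hy_exp (fun s => f (d + s))
      rw [evv_shift, evv_congr_o y (by omega : d + 0 = d)] at h
      rw [h]
      congr 1
      exact Finset.prod_congr rfl fun i _ => evv_shift x' (i * g) d f
    rw [hyd]
    have hsh : ∏ i ∈ Finset.range b, evv x' (d + i * g) f
        = ∏ i ∈ Finset.range b, evv x' ((a + i) * g) f :=
      Finset.prod_congr rfl fun i _ => evv_congr_o x' (by rw [add_mul]; omega) f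
    rw [hsh, Finset.prod_range_add (fun i => evv x' (i * g) f) a b]
    ring
  have hcast : castV hpg (tpowV x'' (a + b)) = z := by
    refine PiLp.ext fun W => ?_
    show tpowV x'' (a + b) (fun i => W (Fin.cast hpg i)) = z W
    set f : ℕ → Fin n := fun s => if hs : s < m then W ⟨s, hs⟩ else ⟨0, hn0⟩ with hf
    have hWf : z W = z (fun t : Fin m => f (t : ℕ)) := by
      refine congrArg z (funext fun t => ?_)
      simp only [hf]
      rw [dif_pos t.isLt]
    rw [hWf, hz_exp f]
    have hR : (α * β) * ∏ q ∈ Finset.range (a + b), evv x' (q * g) f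
        = ∏ i : Fin (a + b), (ρ * evv x' ((i : ℕ) * g) f) := by
      rw [Finset.prod_mul_distrib, Finset.prod_const, Finset.card_univ, Fintype.card_fin,
        Fin.prod_univ_eq_prod_range (fun q => evv x' (q * g) f) (a + b), hρ]
    rw [hR]
    simp only [tpowV]
    refine Finset.prod_congr rfl fun i _ => ?_
    have hρx : ρ * evv x' ((i : ℕ) * g) f = evv x'' ((i : ℕ) * g) f := by
      simp only [hx'', evv, PiLp.smul_apply, smul_eq_mul]
    rw [hρx]
    refine congrArg x'' (funext fun t => ?_)
    show W (Fin.cast hpg _) = f ((i : ℕ) * g + (t : ℕ))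
    simp only [hf]
    rw [dif_pos (show (i : ℕ) * g + (t : ℕ) < m by
      have h1 : (i : ℕ) + 1 ≤ a + b := i.isLt
      have h4 : ((i : ℕ) + 1) * g ≤ (a + b) * g := Nat.mul_le_mul_right g h1
      have h3 : ((i : ℕ) + 1) * g = (i : ℕ) * g + g := by ring
      omega)]
    exact congrArg W (Fin.ext rfl)
  have hxn : ‖x''‖ = 1 := by
    have h1 : ‖castV hpg (tpowV x'' (a + b))‖ = 1 := by rw [hcast, hz]
    rw [castV_norm, tpow_norm' hg1] at h1
    exact pow_eq_one_nonneg (norm_nonneg x'') (by omega) h1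
  exact hznp ⟨g, a + b, x'', hpg, hxn, by omega, hcast⟩

end Core
/-! ### Vanishing of off-diagonal values -/

section OffDiag

open Finset

variable {H : Type*} [NormedAddCommGroup H] [InnerProductSpace ℂ H] [CompleteSpace H]

lemma sword_append {ι : Type*} (S : ι → H →L[ℂ] H) (k l : ℕ) (J : Fin k → ι) (K : Fin l → ι) :
    Sword S (k + l) (Fin.append J K) = (Sword S k J).comp (Sword S l K) := by
  rw [sword_glue S k l (k + l) rfl]
  congr 1
  · refine sword_congr S k fun i => ?_
    have hi : (⟨(i : ℕ), by omega⟩ : Fin (k + l)) = Fin.castAdd l i := Fin.ext rfl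
    rw [hi, Fin.append_left]
  · refine sword_congr S l fun i => ?_
    have hi : (⟨k + (i : ℕ), by omega⟩ : Fin (k + l)) = Fin.natAdd k i := Fin.ext rfl
    rw [hi, Fin.append_right]

lemma notdvd_zero {n m : ℕ} (hn0 : 0 < n) (hm : 1 ≤ m)
    {S : Fin n → H →L[ℂ] H}
    (hS1 : ∀ i j, (ContinuousLinearMap.adjoint (S i)).comp (S j)
      = if i = j then (1 : H →L[ℂ] H) else 0)
    {z : Vnm n m} (hz : ‖z‖ = 1) (hznp : ¬ PeriodicV z)
    {Ω : H} (hfix : sop S z Ω = Ω)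
    (c : ℕ) (hc : ¬ (m ∣ c)) (M : Fin c → Fin n) :
    (inner ℂ Ω (Sword S c M Ω) : ℂ) = 0 := by
  have hr0 : c % m ≠ 0 := fun h => hc (Nat.dvd_of_mod_eq_zero h)
  have hrm : c % m < m := Nat.mod_lt _ (by omega)
  have hsplit : (c / m) * m + c % m = c := by
    have h := Nat.div_add_mod c m
    rw [Nat.mul_comm (c / m) m]
    exact h
  rw [sword_glue S ((c / m) * m) (c % m) c hsplit, ContinuousLinearMap.comp_apply,
    ← ContinuousLinearMap.adjoint_inner_left,
    adj_sword_mul hS1 hfix (c / m) _, inner_smul_left,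
    core_zero hn0 hm hS1 hz hznp hfix (c % m) (by omega) hrm _, mul_zero]

lemma cross_zero {n m : ℕ} (hn0 : 0 < n) (hm : 1 ≤ m)
    {S : Fin n → H →L[ℂ] H}
    (hS1 : ∀ i j, (ContinuousLinearMap.adjoint (S i)).comp (S j)
      = if i = j then (1 : H →L[ℂ] H) else 0)
    {z : Vnm n m} (hz : ‖z‖ = 1) (hznp : ¬ PeriodicV z)
    {Ω : H} (hfix : sop S z Ω = Ω)
    (u v : ℕ) (huv : u ≤ v) (hnd : ¬ ((m : ℤ) ∣ ((v : ℤ) - (u : ℤ))))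
    (L : Fin u → Fin n) (L' : Fin v → Fin n) :
    (inner ℂ (Sword S u L Ω) (Sword S v L' Ω) : ℂ) = 0 := by
  have hndn : ¬ (m ∣ (v - u)) := by
    rintro ⟨cc, hcc⟩
    apply hnd
    refine ⟨cc, ?_⟩
    have h1 : ((v - u : ℕ) : ℤ) = (m : ℤ) * cc := by rw [hcc]; push_cast; ring
    rw [← h1]
    omega
  rw [← ContinuousLinearMap.adjoint_inner_right]
  have hglue : u + (v - u) = v := by omega
  rw [sword_glue S u (v - u) v hglue L', ContinuousLinearMap.comp_apply,
    sword_adj_apply S hS1 u L _]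
  split_ifs
  · exact notdvd_zero hn0 hm hS1 hz hznp hfix (v - u) hndn _
  · exact inner_zero_right _

end OffDiag

/-- values of the sub-Cuntz state with nonperiodic parameter:
(1) if `|J|, |K|` are multiples of `m`, then `⟨Ω, S_J S_K* Ω⟩ = conj(z_J) z_K`;
(2) if `|J| − |K|` is not a multiple of `m`, then `⟨Ω, S_J S_K* Ω⟩ = 0`;
(3) otherwise, for `J = J₁J₂`, `K = K₁K₂` with `|J₁|, |K₁| ∈ mℤ≥0` and
`1 ≤ |J₂| = |K₂| ≤ m−1`,
`⟨Ω, S_J S_K* Ω⟩ = conj(z_{J₁}) z_{K₁} Σ_{|L|=m−|J₂|} conj(z_{J₂L}) z_{K₂L}`. -/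
theorem subCuntz_stmt16 {H : Type*} [NormedAddCommGroup H] [InnerProductSpace ℂ H]
    [CompleteSpace H] {n m : ℕ} (hn : 2 ≤ n) (hm : 1 ≤ m)
    (S : Fin n → H →L[ℂ] H) (hS : IsCuntzFamily S)
    (z : Vnm n m) (hz : ‖z‖ = 1) (hznp : ¬ PeriodicV z)
    (Ω : H) (hΩ : ‖Ω‖ = 1) (hfix : sop S z Ω = Ω) :
    (∀ (a b : ℕ) (J : Fin (a * m) → Fin n) (K : Fin (b * m) → Fin n),
      (inner ℂ Ω (Sword S (a * m) J
          (ContinuousLinearMap.adjoint (Sword S (b * m) K) Ω)) : ℂ)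
        = starRingEnd ℂ (tpowV z a J) * tpowV z b K) ∧
    (∀ (k k' : ℕ), ¬ ((m : ℤ) ∣ ((k : ℤ) - (k' : ℤ))) →
      ∀ (J : Fin k → Fin n) (K : Fin k' → Fin n),
      (inner ℂ Ω (Sword S k J (ContinuousLinearMap.adjoint (Sword S k' K) Ω)) : ℂ) = 0) ∧
    (∀ (a b j : ℕ) (hj1 : 1 ≤ j) (hj2 : j ≤ m - 1)
        (J₁ : Fin (a * m) → Fin n) (J₂ : Fin j → Fin n)
        (K₁ : Fin (b * m) → Fin n) (K₂ : Fin j → Fin n),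
      (inner ℂ Ω (Sword S (a * m + j) (Fin.append J₁ J₂)
          (ContinuousLinearMap.adjoint (Sword S (b * m + j) (Fin.append K₁ K₂)) Ω)) : ℂ)
        = starRingEnd ℂ (tpowV z a J₁) * tpowV z b K₁ *
          ∑ L : Fin (m - j) → Fin n,
            starRingEnd ℂ
              (z (fun i => Fin.append J₂ L (Fin.cast (by omega : m = j + (m - j)) i))) *
            z (fun i => Fin.append K₂ L (Fin.cast (by omega : m = j + (m - j)) i))) := by
  obtain ⟨hS1, hS2⟩ := hS
  have hn0 : 0 < n := by omega
  have hΩ1 : (inner ℂ Ω Ω : ℂ) = 1 := by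
    rw [inner_self_eq_norm_sq_to_K, hΩ]
    norm_num
  refine ⟨?_, ?_, ?_⟩
  · -- (1)
    intro a b J K
    rw [adj_sword_mul hS1 hfix b K, map_smul, inner_smul_right,
      ← ContinuousLinearMap.adjoint_inner_left, adj_sword_mul hS1 hfix a J,
      inner_smul_left, hΩ1]
    ring
  · -- (2)
    intro k k' hnd J K
    have hk : k ≤ k * m := by
      calc k = k * 1 := (Nat.mul_one k).symm
        _ ≤ k * m := Nat.mul_le_mul_left k hm
    have hk' : k' ≤ (k + k') * m := by
      calc k' ≤ k + k' := by omega
        _ = (k + k') * 1 := (Nat.mul_one _).symm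
        _ ≤ (k + k') * m := Nat.mul_le_mul_left _ hm
    have hk'm : k' ≤ k' * m := by
      calc k' = k' * 1 := (Nat.mul_one k').symm
        _ ≤ k' * m := Nat.mul_le_mul_left k' hm
    have hab : (k + k') * m = k * m + k' * m := add_mul k k' m
    have huv : k * m - k ≤ (k + k') * m - k' := by omega
    have hnd2 : ¬ ((m : ℤ) ∣ ((((k + k') * m - k' : ℕ) : ℤ) - ((k * m - k : ℕ) : ℤ))) := by
      rintro ⟨cc, hcc⟩
      apply hnd
      refine ⟨cc - k', ?_⟩
      have e1 : (((k + k') * m - k' : ℕ) : ℤ) - ((k * m - k : ℕ) : ℤ)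
          = ((k' * m : ℕ) : ℤ) + (k : ℤ) - (k' : ℤ) := by omega
      have e3 : ((k' * m : ℕ) : ℤ) = (m : ℤ) * (k' : ℤ) := by push_cast; ring
      rw [mul_sub]
      linear_combination hcc - e1 - e3
    rw [← ContinuousLinearMap.adjoint_inner_left,
      adj_sword_general hS1 hfix k k hk (by omega) J,
      adj_sword_general hS1 hfix k' (k + k') hk' (by omega) K,
      sum_inner]
    refine Finset.sum_eq_zero fun L _ => ?_
    rw [inner_smul_left, inner_sum]
    rw [Finset.sum_eq_zero (fun L' _ => by
      rw [inner_smul_right,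
        cross_zero hn0 hm hS1 hz hznp hfix (k * m - k) ((k + k') * m - k') huv hnd2 L L',
        mul_zero]), mul_zero]
  · -- (3)
    intro a b j hj1 hj2 J₁ J₂ K₁ K₂
    have hjm : j ≤ m := by omega
    have hh : j + (m - j) = m := by omega
    have hfun : ∀ (P : Fin j → Fin n) (L : Fin (m - j) → Fin n),
        (fun i : Fin m => Fin.append P L (Fin.cast (by omega : m = j + (m - j)) i))
          = mixE j (m - j) m hh (P, L) := fun P L => append_cast_eq_mixE _ hh P L
    have hdiag : ∀ L : Fin (m - j) → Fin n,
        (inner ℂ ((z (mixE j (m - j) m hh (J₂, L))) • Sword S (m - j) L Ω)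
          (∑ L' : Fin (m - j) → Fin n,
            (z (mixE j (m - j) m hh (K₂, L'))) • Sword S (m - j) L' Ω) : ℂ)
        = starRingEnd ℂ (z (mixE j (m - j) m hh (J₂, L)))
            * z (mixE j (m - j) m hh (K₂, L)) := by
      intro L
      rw [inner_smul_left, inner_sum]
      rw [Finset.sum_congr rfl (fun L' (_ : L' ∈ Finset.univ) =>
        show (inner ℂ (Sword S (m - j) L Ω)
            ((z (mixE j (m - j) m hh (K₂, L'))) • Sword S (m - j) L' Ω) : ℂ)
          = if L = L' then z (mixE j (m - j) m hh (K₂, L')) else 0 from by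
        rw [inner_smul_right, sword_inner S hS1 (m - j) L L' Ω Ω, hΩ1]
        split_ifs <;> ring)]
      rw [Finset.sum_ite_eq, if_pos (Finset.mem_univ L)]
    rw [sword_append S (a * m) j J₁ J₂, sword_append S (b * m) j K₁ K₂,
      ContinuousLinearMap.adjoint_comp, ContinuousLinearMap.comp_apply,
      ContinuousLinearMap.comp_apply,
      adj_sword_mul hS1 hfix b K₁, map_smul,
      ← ContinuousLinearMap.adjoint_inner_left (Sword S (a * m) J₁),
      adj_sword_mul hS1 hfix a J₁, inner_smul_left, map_smul, inner_smul_right,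
      ← ContinuousLinearMap.adjoint_inner_left (Sword S j J₂),
      adj_sword_partial hS1 hfix j hjm hh J₂, adj_sword_partial hS1 hfix j hjm hh K₂,
      sum_inner,
      Finset.sum_congr rfl (fun L (_ : L ∈ Finset.univ) => hdiag L)]
    have hsum : (∑ L : Fin (m - j) → Fin n,
        starRingEnd ℂ (z (mixE j (m - j) m hh (J₂, L))) * z (mixE j (m - j) m hh (K₂, L)))
        = ∑ L : Fin (m - j) → Fin n,
            starRingEnd ℂ
              (z (fun i => Fin.append J₂ L (Fin.cast (by omega : m = j + (m - j)) i)))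
              * z (fun i => Fin.append K₂ L (Fin.cast (by omega : m = j + (m - j)) i)) := by
      refine Finset.sum_congr rfl fun L _ => ?_
      rw [hfun J₂ L, hfun K₂ L]
    rw [hsum, mul_assoc]
end
end

section
/- (Finitely versus infinitely correlated sub-Cuntz states on O_∞, Hilbert-space form.) Let H be a complex Hilbert space and (S_i)_{i∈ℕ} a sequence of bounded operators on H with S_i* S_j = δ_{ij} I for all i, j ∈ ℕ. Let x = (x_i)_{i∈ℕ} ∈ ℓ²(ℕ) be a unit vector, and let Ω ∈ H be a unit vector such that the series Σ_{i∈ℕ} x_i S_i S_i Ω converges to Ω and such that the linear span of {S_J S_K* Ω : J, K finite words over ℕ} is dense in H, where S_J := S_{j₁}···S_{j_k} for a word J = (j₁,…,j_k) and S_∅ := I. Let N := #{i ∈ ℕ : x_i ≠ 0}. Then the linear span of {S_J* Ω : J a finite word over ℕ} is finite-dimensional if and only if N < ∞. -/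
noncomputable section

open ContinuousLinearMap in
/-- finitely vs. infinitely correlated sub-Cuntz states on `O_∞`:
if `(S_i)_{i∈ℕ}` are isometries with mutually orthogonal ranges, `x ∈ ℓ²(ℕ)` is a unit
vector, `Ω` a cyclic unit vector with `Σᵢ xᵢ Sᵢ Sᵢ Ω = Ω`, then
`span {S_J* Ω}` is finite-dimensional iff `{i : x i ≠ 0}` is finite. -/
theorem subCuntz_stmt19 {H : Type*} [NormedAddCommGroup H] [InnerProductSpace ℂ H]
    [CompleteSpace H] (S : ℕ → H →L[ℂ] H)
    (hS : ∀ i j, (ContinuousLinearMap.adjoint (S i)).comp (S j) = if i = j then 1 else 0)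
    (x : lp (fun _ : ℕ => ℂ) 2) (hx : ‖x‖ = 1)
    (Ω : H) (hΩ : ‖Ω‖ = 1)
    (hsum : HasSum (fun i : ℕ => x i • (S i) ((S i) Ω)) Ω)
    (hcyc : Dense ((Submodule.span ℂ
      {v : H | ∃ (k k' : ℕ) (J : Fin k → ℕ) (K : Fin k' → ℕ),
        v = Sword S k J (ContinuousLinearMap.adjoint (Sword S k' K) Ω)} :
          Submodule ℂ H) : Set H)) :
    FiniteDimensional ℂ (Submodule.span ℂ
      {v : H | ∃ (k : ℕ) (J : Fin k → ℕ),
        v = ContinuousLinearMap.adjoint (Sword S k J) Ω}) ↔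
    {i : ℕ | x i ≠ 0}.Finite := by
  classical
  have hTS : ∀ i j (v : H), adjoint (S i) (S j v) = if i = j then v else 0 := by
    intro i j v
    have := congrArg (fun (A : H →L[ℂ] H) => A v) (hS i j)
    simpa [apply_ite (fun (A : H →L[ℂ] H) => A v)] using this
  have hd : ∀ j, adjoint (S j) Ω = x j • S j Ω := by
    intro j
    have h1 : HasSum (fun i => adjoint (S j) (x i • S i (S i Ω))) (adjoint (S j) Ω) :=
      (adjoint (S j)).hasSum hsum
    have h2 : (fun i => adjoint (S j) (x i • S i (S i Ω)))
        = fun i => if i = j then x j • S j Ω else 0 := by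
      funext i
      rw [map_smul, hTS j i (S i Ω)]
      by_cases h : i = j
      · simp [h]
      · simp [h, Ne.symm h]
    rw [h2] at h1
    exact h1.unique (hasSum_ite_eq j (x j • S j Ω))
  set A : Set H := {Ω} ∪ {v | ∃ j, x j ≠ 0 ∧ v = S j Ω} with hA
  set M := Submodule.span ℂ A with hM
  have key : ∀ (k : ℕ) (J : Fin k → ℕ),
      adjoint (Sword S k J) Ω ∈ M ∧
      ∀ j, x j • adjoint (Sword S k J) (S j Ω) ∈ M := by
    intro k
    induction k with
    | zero =>
      intro J
      have h0 : Sword S 0 J = 1 := rfl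
      have hadj1 : adjoint (Sword S 0 J) = 1 := by
        rw [h0, ContinuousLinearMap.one_def, ContinuousLinearMap.adjoint_id]
      constructor
      · rw [hadj1]
        exact Submodule.subset_span (Set.mem_union_left _ rfl)
      · intro j
        rw [hadj1]
        by_cases h : x j = 0
        · simp [h]
        · have hm : S j Ω ∈ M := Submodule.subset_span (Set.mem_union_right _ ⟨j, h, rfl⟩)
          simpa using M.smul_mem (x j) hm
    | succ k ih =>
      intro J
      have hrec : Sword S (k+1) J = (S (J 0)).comp (Sword S k fun i => J i.succ) := rfl
      have hadj : adjoint (Sword S (k+1) J)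
          = (adjoint (Sword S k fun i => J i.succ)).comp (adjoint (S (J 0))) := by
        rw [hrec, ContinuousLinearMap.adjoint_comp]
      constructor
      · rw [hadj]
        simp only [ContinuousLinearMap.comp_apply]
        rw [hd (J 0), map_smul]
        exact (ih _).2 (J 0)
      · intro j
        rw [hadj]
        simp only [ContinuousLinearMap.comp_apply]
        rw [hTS (J 0) j]
        by_cases h : J 0 = j
        · rw [if_pos h]
          exact M.smul_mem _ (ih _).1
        · rw [if_neg h]
          simp
  constructor
  · -- fin dim ⇒ finite
    intro hFD
    set W := Submodule.span ℂ
      {v : H | ∃ (k : ℕ) (J : Fin k → ℕ), v = adjoint (Sword S k J) Ω} with hW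
    have hmem : ∀ j : {i : ℕ | x i ≠ 0}, S (j : ℕ) Ω ∈ W := by
      rintro ⟨j, hj⟩
      have h1 : Sword S 1 (fun _ => j) = S j := by
        have : Sword S 1 (fun _ => j) = (S j).comp (Sword S 0 (fun i => i.elim0)) := rfl
        rw [this]
        show (S j).comp 1 = S j
        rw [ContinuousLinearMap.one_def, ContinuousLinearMap.comp_id]
      have h2 : adjoint (S j) Ω ∈ W := by
        apply Submodule.subset_span
        exact ⟨1, fun _ => j, by rw [h1]⟩
      have h3 : ((x j)⁻¹ : ℂ) • adjoint (S j) Ω = S j Ω := by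
        rw [hd j, smul_smul, inv_mul_cancel₀ hj, one_smul]
      rw [← h3]
      exact W.smul_mem _ h2
    have hon : Orthonormal ℂ (fun j : {i : ℕ | x i ≠ 0} => S (j : ℕ) Ω) := by
      rw [orthonormal_iff_ite]
      intro i j
      rw [← ContinuousLinearMap.adjoint_inner_right (S (i : ℕ)) Ω (S (j : ℕ) Ω),
        hTS (i : ℕ) (j : ℕ)]
      by_cases h : (i : ℕ) = (j : ℕ)
      · have hij : i = j := Subtype.ext h
        rw [if_pos h, if_pos hij]
        rw [inner_self_eq_norm_sq_to_K, hΩ]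
        norm_num
      · have hij : i ≠ j := fun he => h (congrArg _ he)
        rw [if_neg h, if_neg hij, inner_zero_right]
    have hli : LinearIndependent ℂ (fun j : {i : ℕ | x i ≠ 0} => S (j : ℕ) Ω) :=
      hon.linearIndependent
    have hliW : LinearIndependent ℂ (fun j : {i : ℕ | x i ≠ 0} =>
        (⟨S (j : ℕ) Ω, hmem j⟩ : W)) := by
      apply LinearIndependent.of_comp W.subtype
      exact hli
    have : Finite {i : ℕ | x i ≠ 0} := hliW.finite
    exact Set.toFinite _
  · -- finite ⇒ fin dim
    intro hfin
    have hAfin : A.Finite := by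
      apply Set.Finite.union (Set.finite_singleton Ω)
      have : {v : H | ∃ j, x j ≠ 0 ∧ v = S j Ω} = (fun j => S j Ω) '' {i : ℕ | x i ≠ 0} := by
        ext v
        constructor
        · rintro ⟨j, hj, rfl⟩; exact ⟨j, hj, rfl⟩
        · rintro ⟨j, hj, rfl⟩; exact ⟨j, hj, rfl⟩
      rw [this]
      exact hfin.image _
    have : FiniteDimensional ℂ M := FiniteDimensional.span_of_finite ℂ hAfin
    apply Submodule.finiteDimensional_of_le (S₂ := M)
    rw [Submodule.span_le]
    rintro v ⟨k, J, rfl⟩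
    exact (key k J).1
end
end
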